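/- arXiv:2102.11714 — 6 statements merged into one kernel-verified Lean document; each statement's English description precedes it below -/
import Mathlib

section
/- Let n, k be given with k ∈ ℕ^n, and let y^1 <_lex y^2 <_lex … <_lex y^{|k|} be the enumeration of S(k) in increasing lexicographic order (and set y^0 := 0). Then for every i ∈ {1,…,|k|} and every m ∈ {0,1,…,i−1} such that y^m ≤ y^i (componentwise), one has S(y^i − y^m) ⊆ { y^i − y^j : j = m, m+1, …, i−1 }. -/
/-- The set of nonzero multi-indices componentwise below `x`:
`S(x) = {ξ ∈ ℕ^n : ξ ≤ x componentwise, ξ ≠ 0}`. -/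
def Sfin {n : ℕ} (x : Fin n → ℕ) : Finset (Fin n → ℕ) := (Finset.Iic x).erase 0

/-- `|x| = ∏_ℓ (x_ℓ + 1) − 1`, the number of elements of `S(x)`. -/
def mCard {n : ℕ} (x : Fin n → ℕ) : ℕ := (∏ ℓ, (x ℓ + 1)) - 1

/-- Strict lexicographic order on `ℕ^n`: `a <_lex b` iff at the first coordinate `u`
where they differ, `a u < b u`. -/
def lexLt {n : ℕ} (a b : Fin n → ℕ) : Prop :=
  ∃ u : Fin n, (∀ ℓ, ℓ < u → a ℓ = b ℓ) ∧ a u < b u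

/-- if `y^1 <_lex … <_lex y^{|k|}` enumerates `S(k)` (with `y^0 = 0`), then
for `1 ≤ i ≤ |k|` and `m < i` with `y^m ≤ y^i`, every `ξ ∈ S(y^i − y^m)` is of the form
`y^i − y^j` for some `j ∈ {m, …, i−1}`. -/
theorem lex_lowerOrder_subset {n : ℕ} (k : Fin n → ℕ) (y : ℕ → Fin n → ℕ)
    (hy0 : y 0 = 0)
    (hmem : ∀ m, 1 ≤ m → m ≤ mCard k → y m ∈ Sfin k)
    (hsurj : ∀ ξ ∈ Sfin k, ∃ m, 1 ≤ m ∧ m ≤ mCard k ∧ y m = ξ)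
    (hlex : ∀ m m', 1 ≤ m → m < m' → m' ≤ mCard k → lexLt (y m) (y m'))
    (i : ℕ) (hi1 : 1 ≤ i) (hik : i ≤ mCard k)
    (m : ℕ) (hmi : m < i) (hle : y m ≤ y i) :
    ∀ ξ ∈ Sfin (y i - y m), ∃ j, m ≤ j ∧ j < i ∧ y j + ξ = y i := by
  intro ξ hξ
  rw [Sfin, Finset.mem_erase, Finset.mem_Iic] at hξ
  obtain ⟨hξ0, hξle⟩ := hξ
  have hξle' : ∀ ℓ, ξ ℓ ≤ y i ℓ - y m ℓ := fun ℓ => hξle ℓ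
  have hle' : ∀ ℓ, y m ℓ ≤ y i ℓ := fun ℓ => hle ℓ
  set z : Fin n → ℕ := fun ℓ => y i ℓ - ξ ℓ with hz
  have hξyi : ∀ ℓ, ξ ℓ ≤ y i ℓ := fun ℓ => le_trans (hξle' ℓ) (Nat.sub_le _ _)
  have hzadd : z + ξ = y i := funext fun ℓ => Nat.sub_add_cancel (hξyi ℓ)
  have hmz : ∀ ℓ, y m ℓ ≤ z ℓ := fun ℓ => by
    have h1 := hξle' ℓ; have h2 := hle' ℓ; simp only [hz]; omega
  have hzne : z ≠ y i := by
    have hex : ∃ u, ξ u ≠ 0 := by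
      by_contra h; push_neg at h; exact hξ0 (funext h)
    obtain ⟨u, hu⟩ := hex
    intro h
    have h1 := congrFun h u
    have h2 := hξyi u
    simp only [hz] at h1
    omega
  have hmk : m ≤ mCard k := le_of_lt (lt_of_lt_of_le hmi hik)
  by_cases hz0 : z = 0
  · have hm0 : m = 0 := by
      by_contra hm
      have h1 : 1 ≤ m := Nat.one_le_iff_ne_zero.mpr hm
      have h2 := hmem m h1 hmk
      rw [Sfin, Finset.mem_erase] at h2
      apply h2.1
      funext ℓ
      have h3 := hmz ℓ
      have h4 := congrFun hz0 ℓ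
      simp only [Pi.zero_apply] at h4 ⊢
      omega
    refine ⟨0, by omega, by omega, ?_⟩
    rw [hy0]
    funext ℓ
    have h1 := congrFun hz0 ℓ
    have h2 := hξyi ℓ
    simp only [hz, Pi.zero_apply, Pi.add_apply] at h1 ⊢
    omega
  · have hik' : y i ∈ Sfin k := hmem i hi1 hik
    rw [Sfin, Finset.mem_erase, Finset.mem_Iic] at hik'
    have hzk : z ∈ Sfin k := by
      rw [Sfin, Finset.mem_erase, Finset.mem_Iic]
      exact ⟨hz0, fun ℓ => le_trans (Nat.sub_le _ _) (hik'.2 ℓ)⟩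
    obtain ⟨j, hj1, hjk, hjz⟩ := hsurj z hzk
    have hzlei : ∀ ℓ, z ℓ ≤ y i ℓ := fun ℓ => Nat.sub_le _ _
    have hji : j < i := by
      by_contra h
      push_neg at h
      rcases eq_or_lt_of_le h with h | h
      · rw [← h] at hjz; exact hzne hjz.symm
      · obtain ⟨u, _, hu⟩ := hlex i j hi1 h hjk
        have h1 := hzlei u
        have h2 := congrFun hjz u
        omega
    have hmj : m ≤ j := by
      by_contra h
      push_neg at h
      obtain ⟨u, _, hu⟩ := hlex j m hj1 h hmk
      have h1 := hmz u
      have h2 := congrFun hjz u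
      omega
    exact ⟨j, hmj, hji, by rw [hjz]; exact hzadd⟩
end

section
/- Let k ∈ ℕ^n and let y^1 <_lex … <_lex y^{|k|} be the lexicographically ordered enumeration of S(k), with y^0 := 0. Fix i ∈ {1,…,|k|} and m ∈ {0,…,i−1} with y^m ≤ y^i. Then for every ξ ∈ S(y^i − y^m) there exists exactly one index j ∈ {m, m+1, …, i−1} with y^i − y^j = ξ; equivalently, ∑_{j=1}^{i−m} 𝟙(y^i − y^{i−j} = ξ) = 1. -/
lemma not_lexLt_of_le {n : ℕ} {a b : Fin n → ℕ} (h : a ≤ b) : ¬ lexLt b a := by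
  rintro ⟨u, -, hu⟩
  exact Nat.lt_irrefl _ (lt_of_le_of_lt (h u) hu)

lemma mem_Sfin {n : ℕ} {x ξ : Fin n → ℕ} : ξ ∈ Sfin x ↔ ξ ≠ 0 ∧ ξ ≤ x := by
  simp [Sfin, Finset.mem_erase]

/-- if `y^1 <_lex … <_lex y^{|k|}` enumerates `S(k)` (with `y^0 = 0`), then
for `1 ≤ i ≤ |k|` and `m < i` with `y^m ≤ y^i`, every `ξ ∈ S(y^i − y^m)` equals
`y^i − y^j` for exactly one `j ∈ {m, …, i−1}`; equivalently the count of such `j` is `1`. -/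
theorem lex_lowerOrder_unique {n : ℕ} (k : Fin n → ℕ) (y : ℕ → Fin n → ℕ)
    (hy0 : y 0 = 0)
    (hmem : ∀ m, 1 ≤ m → m ≤ mCard k → y m ∈ Sfin k)
    (hsurj : ∀ ξ ∈ Sfin k, ∃ m, 1 ≤ m ∧ m ≤ mCard k ∧ y m = ξ)
    (hlex : ∀ m m', 1 ≤ m → m < m' → m' ≤ mCard k → lexLt (y m) (y m'))
    (i : ℕ) (hi1 : 1 ≤ i) (hik : i ≤ mCard k)
    (m : ℕ) (hmi : m < i) (hle : y m ≤ y i) :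
    ∀ ξ ∈ Sfin (y i - y m),
      (∃! j : ℕ, m ≤ j ∧ j < i ∧ y j + ξ = y i) ∧
      ((Finset.Ico m i).filter (fun j => y j + ξ = y i)).card = 1 := by
  intro ξ hξ
  rw [mem_Sfin] at hξ
  obtain ⟨hξ0, hξle⟩ := hξ
  -- componentwise facts
  have hξle' : ∀ ℓ, ξ ℓ ≤ y i ℓ - y m ℓ := fun ℓ => hξle ℓ
  have hξyi : ∀ ℓ, ξ ℓ ≤ y i ℓ := fun ℓ => le_trans (hξle' ℓ) (Nat.sub_le _ _)
  set η : Fin n → ℕ := y i - ξ with hη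
  have hηa : ∀ ℓ, η ℓ = y i ℓ - ξ ℓ := fun ℓ => rfl
  have hηadd : η + ξ = y i := by
    funext ℓ
    exact Nat.sub_add_cancel (hξyi ℓ)
  have hmη : y m ≤ η := by
    intro ℓ
    have h1 := hξle' ℓ
    have h2 := hle ℓ
    have h4 : ξ ℓ + y m ℓ ≤ y i ℓ := Nat.add_le_of_le_sub h2 h1
    exact Nat.le_sub_of_add_le (by omega)
  have hηyi : η ≤ y i := fun ℓ => Nat.sub_le _ _
  have hηne : η ≠ y i := by
    intro h
    apply hξ0
    have := hηadd
    rw [h] at this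
    funext ℓ
    have := congrFun this ℓ
    simp only [Pi.add_apply] at this
    simpa using this
  -- existence of j₀
  have hex : ∃ j, m ≤ j ∧ j < i ∧ y j + ξ = y i := by
    by_cases hη0 : η = 0
    · -- then y m = 0, so m = 0 (since y m ≤ η = 0...)
      have hym0 : y m = 0 := by
        funext ℓ
        have := hmη ℓ
        rw [hη0] at this
        simpa using Nat.le_antisymm this (Nat.zero_le _)
      have hm0 : m = 0 := by
        by_contra hm
        have h1 : 1 ≤ m := Nat.one_le_iff_ne_zero.mpr hm
        have := (mem_Sfin.mp (hmem m h1 (le_of_lt (lt_of_lt_of_le hmi hik)))).1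
        exact this hym0
      refine ⟨0, by omega, by omega, ?_⟩
      rw [hy0]
      rw [hm0, hym0] at *
      rw [← hηadd, hη0]
    · -- η ∈ Sfin k
      have hyik : y i ≤ k := (mem_Sfin.mp (hmem i hi1 hik)).2
      have hηS : η ∈ Sfin k := mem_Sfin.mpr ⟨hη0, le_trans hηyi hyik⟩
      obtain ⟨j, hj1, hjk, hjη⟩ := hsurj η hηS
      have hji : j < i := by
        rcases lt_trichotomy j i with h | h | h
        · exact h
        · exfalso; rw [h] at hjη; exact hηne hjη.symm
        · exfalso
          have := hlex i j hi1 h hjk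
          rw [hjη] at this
          exact not_lexLt_of_le hηyi this
      have hmj : m ≤ j := by
        by_contra h
        push_neg at h
        have h1 : 1 ≤ j := hj1
        have := hlex j m h1 h (le_of_lt (lt_of_lt_of_le hmi hik))
        rw [hjη] at this
        exact not_lexLt_of_le hmη this
      exact ⟨j, hmj, hji, by rw [hjη]; exact hηadd⟩
  -- uniqueness
  have huniq : ∀ j₁ j₂, (m ≤ j₁ ∧ j₁ < i ∧ y j₁ + ξ = y i) →
      (m ≤ j₂ ∧ j₂ < i ∧ y j₂ + ξ = y i) → j₁ = j₂ := by
    intro j₁ j₂ ⟨_, hj₁i, he₁⟩ ⟨_, hj₂i, he₂⟩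
    have heq : y j₁ = y j₂ := by
      have : y j₁ + ξ = y j₂ + ξ := by rw [he₁, he₂]
      exact add_right_cancel this
    by_contra hne
    -- wlog j₁ < j₂
    rcases lt_trichotomy j₁ j₂ with h | h | h
    · by_cases h1 : 1 ≤ j₁
      · have := hlex j₁ j₂ h1 h (by omega)
        rw [heq] at this
        exact not_lexLt_of_le le_rfl this
      · have hj₁0 : j₁ = 0 := by omega
        have : y j₂ ∈ Sfin k := hmem j₂ (by omega) (by omega)
        rw [← heq, hj₁0, hy0] at this
        exact (mem_Sfin.mp this).1 rfl
    · exact hne h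
    · by_cases h1 : 1 ≤ j₂
      · have := hlex j₂ j₁ h1 h (by omega)
        rw [heq] at this
        exact not_lexLt_of_le le_rfl this
      · have hj₂0 : j₂ = 0 := by omega
        have : y j₁ ∈ Sfin k := hmem j₁ (by omega) (by omega)
        rw [heq, hj₂0, hy0] at this
        exact (mem_Sfin.mp this).1 rfl
  obtain ⟨j₀, hj₀⟩ := hex
  constructor
  · exact ⟨j₀, hj₀, fun j hj => huniq j j₀ hj hj₀⟩
  · rw [Finset.card_eq_one]
    refine ⟨j₀, Finset.eq_singleton_iff_unique_mem.mpr ⟨?_, ?_⟩⟩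
    · simp only [Finset.mem_filter, Finset.mem_Ico]
      exact ⟨⟨hj₀.1, hj₀.2.1⟩, hj₀.2.2⟩
    · intro j hj
      simp only [Finset.mem_filter, Finset.mem_Ico] at hj
      exact huniq j j₀ ⟨hj.1.1, hj.1.2, hj.2⟩ hj₀
end

section
/- Let A : ℝ → Matrix (Fin J) (Fin J) ℝ be continuous on [a,t], and let B(s,t) = ∑_{m=0}^∞ I_m(s,t) be the Peano–Baker series of A. Then B(t,t) = Id and for every s ∈ [a,t] the map s ↦ B(s,t) is differentiable with derivative ∂/∂s B(s,t) = −A(s) B(s,t). -/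
open MeasureTheory intervalIntegral Topology Filter

attribute [local instance] Matrix.linftyOpNormedAddCommGroup Matrix.linftyOpNormedSpace
  Matrix.linftyOpNormedRing Matrix.linftyOpNormedAlgebra

/-- Iterated integrals of the Peano-Baker series:
`I_0(s,t) = Id`, `I_{m+1}(s,t) = int_s^t I_m(s,x) A(x) dx`. -/
noncomputable def iterInt {ι : Type*} [Fintype ι] [DecidableEq ι]
    (A : ℝ → Matrix ι ι ℝ) : ℕ → ℝ → ℝ → Matrix ι ι ℝ
  | 0, _s, _t => 1
  | m + 1, s, t => ∫ x in s..t, iterInt A m s x * A x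

/-- The Peano-Baker series (product integral) of `A` over `(s,t]`. -/
noncomputable def peanoBaker {ι : Type*} [Fintype ι] [DecidableEq ι]
    (A : ℝ → Matrix ι ι ℝ) (s t : ℝ) : Matrix ι ι ℝ :=
  ∑' m : ℕ, iterInt A m s t

lemma triangle_swap {E : Type*} [NormedAddCommGroup E] [NormedSpace ℝ E] [CompleteSpace E]
    (f : ℝ → ℝ → E) (hf : Continuous fun p : ℝ × ℝ => f p.1 p.2) {s t : ℝ} (hst : s ≤ t) :
    (∫ x in s..t, ∫ y in s..x, f y x) = ∫ y in s..t, ∫ x in y..t, f y x := by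
  set μ := volume.restrict (Set.Ioc s t) with hμ
  set F : ℝ × ℝ → E := Set.indicator {p : ℝ × ℝ | p.1 ≤ p.2} (fun p => f p.1 p.2) with hF
  have hmeasS : MeasurableSet {p : ℝ × ℝ | p.1 ≤ p.2} :=
    measurableSet_le measurable_fst measurable_snd
  have hFint : Integrable F (μ.prod μ) := by
    rw [hμ, Measure.prod_restrict]
    have h1 : IntegrableOn (fun p : ℝ × ℝ => f p.1 p.2) (Set.Icc s t ×ˢ Set.Icc s t) :=
      hf.continuousOn.integrableOn_compact (isCompact_Icc.prod isCompact_Icc)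
    have h2 : IntegrableOn (fun p : ℝ × ℝ => f p.1 p.2) (Set.Ioc s t ×ˢ Set.Ioc s t) :=
      h1.mono_set (Set.prod_mono Set.Ioc_subset_Icc_self Set.Ioc_subset_Icc_self)
    exact h2.indicator hmeasS
  have swap := MeasureTheory.integral_integral_swap (μ := μ) (ν := μ)
    (f := fun y x => F (y, x)) hFint
  -- inner integral in y, fixed x
  have hBx : ∀ x ∈ Set.Ioc s t, (∫ y, F (y, x) ∂μ) = ∫ y in s..x, f y x := by
    intro x hx
    have hsx : s ≤ x := le_of_lt hx.1
    have hxt : x ≤ t := hx.2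
    have hunion : Set.Ioc s x ∪ Set.Ioc x t = Set.Ioc s t := Set.Ioc_union_Ioc_eq_Ioc hsx hxt
    have hdisj : Disjoint (Set.Ioc s x) (Set.Ioc x t) :=
      Set.disjoint_left.mpr fun y h1 h2 => absurd h1.2 (not_le.mpr h2.1)
    have hint1 : IntegrableOn (fun y => f y x) (Set.Ioc s x) :=
      (hf.comp (continuous_id.prodMk continuous_const)).integrableOn_Ioc
    have heq1 : Set.EqOn (fun y => F (y, x)) (fun y => f y x) (Set.Ioc s x) := by
      intro y hy; simp only [hF]
      exact Set.indicator_of_mem (by exact hy.2) _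
    have heq2 : Set.EqOn (fun y => F (y, x)) (fun _ => (0 : E)) (Set.Ioc x t) := by
      intro y hy; simp only [hF]
      exact Set.indicator_of_notMem (by exact not_le.mpr hy.1) _
    rw [hμ, ← hunion, setIntegral_union hdisj measurableSet_Ioc
      (hint1.congr_fun heq1.symm measurableSet_Ioc)
      ((integrableOn_zero).congr_fun heq2.symm measurableSet_Ioc),
      setIntegral_congr_fun measurableSet_Ioc heq1, setIntegral_congr_fun measurableSet_Ioc heq2,
      MeasureTheory.integral_zero, add_zero, intervalIntegral.integral_of_le hsx]
  -- inner integral in x, fixed y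
  have hBy : ∀ y ∈ Set.Ioc s t, (∫ x, F (y, x) ∂μ) = ∫ x in y..t, f y x := by
    intro y hy
    have hsy : s ≤ y := le_of_lt hy.1
    have hyt : y ≤ t := hy.2
    have hunion : Set.Ioc s y ∪ Set.Ioc y t = Set.Ioc s t := Set.Ioc_union_Ioc_eq_Ioc hsy hyt
    have hdisj : Disjoint (Set.Ioc s y) (Set.Ioc y t) :=
      Set.disjoint_left.mpr fun x h1 h2 => absurd h1.2 (not_le.mpr h2.1)
    have hae : ∀ᵐ (x : ℝ), x ∈ Set.Ioc s y → F (y, x) = 0 := by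
      have hne : ∀ᵐ (x : ℝ), x ≠ y := by
        refine (MeasureTheory.ae_iff).mpr ?_
        simpa using Real.volume_singleton (a := y)
      filter_upwards [hne] with x hxy hx
      simp only [hF]
      exact Set.indicator_of_notMem (not_le.mpr (lt_of_le_of_ne hx.2 hxy)) _
    have heq2 : Set.EqOn (fun x => F (y, x)) (fun x => f y x) (Set.Ioc y t) := by
      intro x hx; simp only [hF]
      exact Set.indicator_of_mem (le_of_lt hx.1) _
    have hint2 : IntegrableOn (fun x => f y x) (Set.Ioc y t) :=
      (hf.comp (continuous_const.prodMk continuous_id)).integrableOn_Ioc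
    rw [hμ, ← hunion, setIntegral_union hdisj measurableSet_Ioc
      ((integrableOn_zero).congr ((ae_restrict_iff' measurableSet_Ioc).mpr
        (hae.mono fun x h hx => (h hx).symm)))
      (hint2.congr_fun heq2.symm measurableSet_Ioc),
      setIntegral_congr_ae measurableSet_Ioc hae,
      setIntegral_congr_fun measurableSet_Ioc heq2, MeasureTheory.integral_zero, zero_add,
      intervalIntegral.integral_of_le hyt]
  calc (∫ x in s..t, ∫ y in s..x, f y x)
      = ∫ x in Set.Ioc s t, (∫ y in s..x, f y x) := intervalIntegral.integral_of_le hst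
    _ = ∫ x in Set.Ioc s t, (∫ y, F (y, x) ∂μ) :=
        setIntegral_congr_fun measurableSet_Ioc (fun x hx => (hBx x hx).symm)
    _ = ∫ y in Set.Ioc s t, (∫ x, F (y, x) ∂μ) := by rw [hμ] at swap ⊢; exact swap.symm
    _ = ∫ y in Set.Ioc s t, (∫ x in y..t, f y x) := setIntegral_congr_fun measurableSet_Ioc hBy
    _ = ∫ y in s..t, ∫ x in y..t, f y x := (intervalIntegral.integral_of_le hst).symm

section PB
variable {ι : Type*} [Fintype ι] [DecidableEq ι] {A : ℝ → Matrix ι ι ℝ}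

noncomputable instance matENormedAddMonoid : ENormedAddMonoid (Matrix ι ι ℝ) :=
  NormedAddGroup.toENormedAddMonoid
instance matPseudoMetrizable : TopologicalSpace.PseudoMetrizableSpace (Matrix ι ι ℝ) :=
  PseudoEMetricSpace.pseudoMetrizableSpace

lemma matInt_const_mul (c : Matrix ι ι ℝ) {f : ℝ → Matrix ι ι ℝ} {u v : ℝ}
    (hf : IntervalIntegrable f volume u v) :
    (∫ x in u..v, c * f x) = c * ∫ x in u..v, f x := by
  simpa using (ContinuousLinearMap.mul ℝ (Matrix ι ι ℝ) c).intervalIntegral_comp_comm hf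

lemma matInt_mul_const (c : Matrix ι ι ℝ) {f : ℝ → Matrix ι ι ℝ} {u v : ℝ}
    (hf : IntervalIntegrable f volume u v) :
    (∫ x in u..v, f x * c) = (∫ x in u..v, f x) * c := by
  simpa using ((ContinuousLinearMap.mul ℝ (Matrix ι ι ℝ)).flip c).intervalIntegral_comp_comm hf

lemma iterInt_cont (hA : Continuous A) (m : ℕ) :
    Continuous (fun p : ℝ × ℝ => iterInt A m p.1 p.2) := by
  induction m with
  | zero => exact continuous_const
  | succ m ih =>
    have hg : Continuous (Function.uncurry (fun (p : ℝ × ℝ) (x : ℝ) =>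
        iterInt A m p.1 x * A x)) := by
      apply Continuous.mul
      · exact ih.comp ((continuous_fst.comp continuous_fst).prodMk continuous_snd)
      · exact hA.comp continuous_snd
    have h1 : Continuous fun p : ℝ × ℝ => ∫ x in (0:ℝ)..p.2, iterInt A m p.1 x * A x :=
      intervalIntegral.continuous_parametric_intervalIntegral_of_continuous hg continuous_snd
    have h2 : Continuous fun p : ℝ × ℝ => ∫ x in (0:ℝ)..p.1, iterInt A m p.1 x * A x :=
      intervalIntegral.continuous_parametric_intervalIntegral_of_continuous hg continuous_fst
    have : (fun p : ℝ × ℝ => iterInt A (m+1) p.1 p.2) = fun p : ℝ × ℝ =>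
        (∫ x in (0:ℝ)..p.2, iterInt A m p.1 x * A x)
          - ∫ x in (0:ℝ)..p.1, iterInt A m p.1 x * A x := by
      funext p
      have hi : ∀ u v : ℝ, IntervalIntegrable (fun x => iterInt A m p.1 x * A x) volume u v :=
        fun u v => (Continuous.intervalIntegrable
          ((ih.comp (continuous_const.prodMk continuous_id)).mul hA) u v)
      have := intervalIntegral.integral_add_adjacent_intervals (hi 0 p.1) (hi p.1 p.2)
      show (∫ x in p.1..p.2, iterInt A m p.1 x * A x) = _
      rw [← this]; abel
    rw [this]
    exact h1.sub h2

lemma iterInt_alt (hA : Continuous A) (m : ℕ) : ∀ {s t : ℝ}, s ≤ t →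
    iterInt A (m + 1) s t = ∫ y in s..t, A y * iterInt A m y t := by
  induction m with
  | zero =>
    intro s t hst
    show (∫ x in s..t, iterInt A 0 s x * A x) = _
    simp [iterInt]
  | succ m ih =>
    intro s t hst
    have hcm := iterInt_cont hA m
    have hcm1 := iterInt_cont hA (m + 1)
    have hfc : Continuous fun p : ℝ × ℝ => A p.1 * iterInt A m p.1 p.2 * A p.2 :=
      ((hA.comp continuous_fst).mul hcm).mul (hA.comp continuous_snd)
    have key := triangle_swap (fun y x => A y * iterInt A m y x * A x) hfc hst
    calc iterInt A (m + 2) s t = ∫ x in s..t, iterInt A (m + 1) s x * A x := rfl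
      _ = ∫ x in s..t, (∫ y in s..x, A y * iterInt A m y x) * A x := by
          apply intervalIntegral.integral_congr
          intro x hx
          rw [Set.uIcc_of_le hst] at hx
          simp only; rw [ih hx.1]
      _ = ∫ x in s..t, ∫ y in s..x, A y * iterInt A m y x * A x := by
          apply intervalIntegral.integral_congr
          intro x hx
          simp only
          rw [matInt_mul_const]
          exact ((hA.mul (hcm.comp (continuous_id.prodMk continuous_const)))).intervalIntegrable
            _ _
      _ = ∫ y in s..t, ∫ x in y..t, A y * iterInt A m y x * A x := key
      _ = ∫ y in s..t, A y * iterInt A (m + 1) y t := by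
          apply intervalIntegral.integral_congr
          intro y hy
          simp only
          have : (fun x => A y * iterInt A m y x * A x)
              = fun x => A y * (iterInt A m y x * A x) := by
            funext x; rw [mul_assoc]
          rw [this, matInt_const_mul]
          · rfl
          · exact ((hcm.comp (continuous_const.prodMk continuous_id)).mul hA).intervalIntegrable
              _ _


lemma norm_one_le : ‖(1 : Matrix ι ι ℝ)‖ ≤ 1 := by
  cases isEmpty_or_nonempty ι with
  | inl h =>
    have : (1 : Matrix ι ι ℝ) = 0 := Subsingleton.elim _ _
    rw [this, norm_zero]; norm_num
  | inr h => exact le_of_eq norm_one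

lemma iterInt_norm_le (hA : Continuous A) {M : ℝ} (hM0 : 0 ≤ M) (hM : ∀ x, ‖A x‖ ≤ M)
    (m : ℕ) : ∀ {s u : ℝ}, s ≤ u →
    ‖iterInt A m s u‖ ≤ (M * (u - s)) ^ m / m.factorial := by
  induction m with
  | zero =>
    intro s u _
    simpa [iterInt] using norm_one_le (ι := ι)
  | succ m ih =>
    intro s u hsu
    have hsub : ∀ x ∈ Set.Ioc s u, ‖iterInt A m s x * A x‖
        ≤ M ^ (m + 1) / m.factorial * (x - s) ^ m := by
      intro x hx
      have h1 : ‖iterInt A m s x‖ ≤ (M * (x - s)) ^ m / m.factorial := ih hx.1.le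
      calc ‖iterInt A m s x * A x‖ ≤ ‖iterInt A m s x‖ * ‖A x‖ := norm_mul_le _ _
        _ ≤ ((M * (x - s)) ^ m / m.factorial) * M := by
            exact mul_le_mul h1 (hM x) (norm_nonneg _)
              (div_nonneg (pow_nonneg (mul_nonneg hM0 (by linarith [hx.1])) m) (by positivity))
        _ = M ^ (m + 1) / m.factorial * (x - s) ^ m := by
            rw [mul_pow, pow_succ]; ring
    have hg : IntervalIntegrable (fun x => M ^ (m + 1) / m.factorial * (x - s) ^ m)
        volume s u := (Continuous.intervalIntegrable (by fun_prop) _ _)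
    have hnorm := intervalIntegral.norm_integral_le_abs_of_norm_le (μ := volume)
      (f := fun x => iterInt A m s x * A x)
      (g := fun x => M ^ (m + 1) / m.factorial * (x - s) ^ m)
      ((ae_restrict_iff' measurableSet_uIoc).mpr (Filter.Eventually.of_forall
        fun x hx => hsub x (by rwa [Set.uIoc_of_le hsu] at hx))) hg
    have hval : (∫ x in s..u, M ^ (m + 1) / m.factorial * (x - s) ^ m)
        = (M * (u - s)) ^ (m + 1) / (m + 1).factorial := by
      rw [intervalIntegral.integral_const_mul]
      have : (∫ x in s..u, (x - s) ^ m) = (u - s) ^ (m + 1) / (m + 1) := by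
        rw [intervalIntegral.integral_comp_sub_right (fun x => x ^ m) s]
        simp [integral_pow]
      rw [this, mul_pow, Nat.factorial_succ]
      push_cast
      rw [div_mul_div_comm, mul_comm ((m.factorial : ℝ)) ((m : ℝ) + 1)]
    calc ‖iterInt A (m + 1) s u‖
        = ‖∫ x in s..u, iterInt A m s x * A x‖ := rfl
      _ ≤ |∫ x in s..u, M ^ (m + 1) / m.factorial * (x - s) ^ m| := hnorm
      _ = (M * (u - s)) ^ (m + 1) / (m + 1).factorial := by
          rw [hval, abs_of_nonneg]
          exact div_nonneg (pow_nonneg (mul_nonneg hM0 (sub_nonneg.mpr hsu)) _) (by positivity)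


set_option maxHeartbeats 1000000 in
lemma iterInt_summable (hA : Continuous A) {M : ℝ} (hM0 : 0 ≤ M) (hM : ∀ x, ‖A x‖ ≤ M)
    {s u : ℝ} (hsu : s ≤ u) : Summable fun m => iterInt A m s u := by
  apply Summable.of_norm_bounded (g := fun m => (M * (u - s)) ^ m / m.factorial)
    (Real.summable_pow_div_factorial _)
  exact fun m => iterInt_norm_le hA hM0 hM m hsu

lemma peanoBaker_hasSum (hA : Continuous A) {M : ℝ} (hM0 : 0 ≤ M) (hM : ∀ x, ‖A x‖ ≤ M)
    {s u : ℝ} (hsu : s ≤ u) :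
    HasSum (fun m => iterInt A m s u) (peanoBaker A s u) :=
  (iterInt_summable hA hM0 hM hsu).hasSum

lemma peanoBaker_contOn (hA : Continuous A) {M : ℝ} (hM0 : 0 ≤ M) (hM : ∀ x, ‖A x‖ ≤ M)
    (t : ℝ) : ContinuousOn (fun y => peanoBaker A y t) (Set.Iic t) := by
  intro y0 hy0
  have hy0' : y0 ≤ t := hy0
  have hmem : y0 ∈ Set.Icc (y0 - 1) t := ⟨by linarith, hy0'⟩
  have hcont : ContinuousOn (fun y => peanoBaker A y t) (Set.Icc (y0 - 1) t) := by
    have hu : Summable fun m => (M * (t - (y0 - 1))) ^ m / m.factorial :=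
      Real.summable_pow_div_factorial _
    have hb : ∀ (m : ℕ) (y : ℝ), y ∈ Set.Icc (y0 - 1) t →
        ‖iterInt A m y t‖ ≤ (M * (t - (y0 - 1))) ^ m / m.factorial := by
      intro m y hy
      refine (iterInt_norm_le hA hM0 hM m hy.2).trans ?_
      gcongr
      · exact mul_nonneg hM0 (by linarith [hy.2])
      · linarith [hy.1]
    have htu := tendstoUniformlyOn_tsum hu hb
    apply htu.continuousOn
    refine Filter.Frequently.of_forall fun fs => ?_
    exact continuousOn_finset_sum fs fun m _ =>
      ((iterInt_cont hA m).comp (continuous_id.prodMk continuous_const)).continuousOn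
  refine (hcont y0 hmem).mono_of_mem_nhdsWithin ?_
  rw [← Set.Ici_inter_Iic, Set.inter_comm]
  exact Filter.inter_mem self_mem_nhdsWithin
    (mem_nhdsWithin_of_mem_nhds (Ici_mem_nhds (by linarith)))


lemma peanoBaker_eq (hA : Continuous A) {M : ℝ} (hM0 : 0 ≤ M) (hM : ∀ x, ‖A x‖ ≤ M)
    {s t : ℝ} (hst : s ≤ t) :
    peanoBaker A s t = 1 + ∫ y in s..t, A y * peanoBaker A y t := by
  have hsum0 := iterInt_summable hA hM0 hM hst
  have hHS : HasSum (fun m => ∫ y in s..t, A y * iterInt A m y t)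
      (∫ y in s..t, A y * peanoBaker A y t) := by
    apply intervalIntegral.hasSum_integral_of_dominated_convergence
      (bound := fun m _y => M * ((M * (t - s)) ^ m / m.factorial))
    · intro m
      exact (hA.mul ((iterInt_cont hA m).comp
        (continuous_id.prodMk continuous_const))).aestronglyMeasurable
    · intro m
      apply Filter.Eventually.of_forall
      intro y hy
      rw [Set.uIoc_of_le hst] at hy
      have h1 : ‖iterInt A m y t‖ ≤ (M * (t - y)) ^ m / m.factorial :=
        iterInt_norm_le hA hM0 hM m hy.2
      calc ‖A y * iterInt A m y t‖ ≤ ‖A y‖ * ‖iterInt A m y t‖ := norm_mul_le _ _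
        _ ≤ M * ((M * (t - y)) ^ m / m.factorial) :=
            mul_le_mul (hM y) h1 (norm_nonneg _) hM0
        _ ≤ M * ((M * (t - s)) ^ m / m.factorial) := by
            gcongr
            · exact mul_nonneg hM0 (by linarith [hy.2])
            · linarith [hy.1]
    · exact Filter.Eventually.of_forall fun y _ =>
        ((Real.summable_pow_div_factorial (M * (t - s))).mul_left M)
    · exact intervalIntegrable_const
    · apply Filter.Eventually.of_forall
      intro y hy
      rw [Set.uIoc_of_le hst] at hy
      have h := (peanoBaker_hasSum hA hM0 hM hy.2).mapL
        (ContinuousLinearMap.mul ℝ (Matrix ι ι ℝ) (A y))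
      simpa using h
  have heq : (fun m => ∫ y in s..t, A y * iterInt A m y t)
      = fun m => iterInt A (m + 1) s t := funext fun m => (iterInt_alt hA m hst).symm
  rw [heq] at hHS
  rw [peanoBaker, Summable.tsum_eq_zero_add hsum0, ← hHS.tsum_eq]
  rfl

lemma peanoBaker_hasDerivWithinAt_ext (hA : Continuous A) {M : ℝ} (hM0 : 0 ≤ M)
    (hM : ∀ x, ‖A x‖ ≤ M) {a t s : ℝ} (hs : s ∈ Set.Icc a t) :
    HasDerivWithinAt (fun s' => peanoBaker A s' t)
      (-(A s * peanoBaker A s t)) (Set.Icc a t) s := by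
  set g : ℝ → Matrix ι ι ℝ := fun y => A y * peanoBaker A y t with hg
  have hgcont : ContinuousOn g (Set.Iic t) :=
    (hA.continuousOn).mul (peanoBaker_contOn hA hM0 hM t)
  have hgint : IntervalIntegrable g volume s t := by
    apply ContinuousOn.intervalIntegrable
    apply hgcont.mono
    rw [Set.uIcc_of_le hs.2]
    exact fun x hx => hx.2
  have hφ : HasDerivWithinAt (fun u => ∫ x in u..t, g x) (-(g s)) (Set.Icc a t) s := by
    rcases lt_or_eq_of_le hs.2 with hlt | heq
    · have hca : ContinuousAt g s := hgcont.continuousAt (Iic_mem_nhds hlt)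
      have hmeas : StronglyMeasurableAtFilter g (𝓝 s) :=
        ⟨Set.Iio t, Iio_mem_nhds hlt,
          (hgcont.mono Set.Iio_subset_Iic_self).aestronglyMeasurable measurableSet_Iio⟩
      exact (intervalIntegral.integral_hasDerivAt_left hgint hmeas hca).hasDerivWithinAt
    · subst heq
      have hmeas : StronglyMeasurableAtFilter g (𝓝[≤] s) :=
        ⟨Set.Iic s, self_mem_nhdsWithin, hgcont.aestronglyMeasurable measurableSet_Iic⟩
      have hcw : ContinuousWithinAt g (Set.Iic s) s := hgcont s Set.self_mem_Iic
      have h := intervalIntegral.integral_hasDerivWithinAt_left hgint hmeas hcw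
        (s := Set.Iic s)
      exact h.mono (fun x hx => hx.2)
  have hφ' : HasDerivWithinAt (fun u => 1 + ∫ x in u..t, g x) (-(g s)) (Set.Icc a t) s :=
    hφ.const_add 1
  refine hφ'.congr (fun y hy => ?_) ?_
  · exact peanoBaker_eq hA hM0 hM hy.2
  · exact peanoBaker_eq hA hM0 hM hs.2
end PB

section Main
variable {ι : Type*} [Fintype ι] [DecidableEq ι]

lemma iterInt_congr {A B : ℝ → Matrix ι ι ℝ} {a t : ℝ}
    (hAB : ∀ x ∈ Set.Icc a t, A x = B x) (m : ℕ) :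
    ∀ s ∈ Set.Icc a t, ∀ u ∈ Set.Icc a t, iterInt A m s u = iterInt B m s u := by
  induction m with
  | zero => intro s _ u _; rfl
  | succ m ih =>
    intro s hs u hu
    show (∫ x in s..u, iterInt A m s x * A x) = ∫ x in s..u, iterInt B m s x * B x
    apply intervalIntegral.integral_congr
    intro x hx
    have hx' : x ∈ Set.Icc a t := by
      have hIcc : Set.uIcc s u ⊆ Set.uIcc a t :=
        Set.uIcc_subset_uIcc (by rw [Set.uIcc_of_le (hs.1.trans hs.2)]; exact hs)
          (by rw [Set.uIcc_of_le (hs.1.trans hs.2)]; exact hu)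
      rw [Set.uIcc_of_le (hs.1.trans hs.2)] at hIcc
      exact hIcc hx
    simp only
    rw [ih s hs x hx', hAB x hx']

lemma peanoBaker_one (A : ℝ → Matrix ι ι ℝ) (t : ℝ) : peanoBaker A t t = 1 := by
  rw [peanoBaker, tsum_eq_single 0]
  · rfl
  · intro m hm
    match m, hm with
    | m + 1, _ =>
      show (∫ x in t..t, iterInt A m t x * A x) = 0
      exact intervalIntegral.integral_same


/-- the Peano-Baker series satisfies `B(t,t) = Id` and, as a function of its
lower limit `s ∈ [a,t]`, is differentiable with derivative `-A(s) B(s,t)`. -/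
theorem peanoBaker_hasDerivAt {J : ℕ}
    (A : ℝ → Matrix (Fin J) (Fin J) ℝ) (a t : ℝ) (hat : a ≤ t)
    (hA : ContinuousOn A (Set.Icc a t)) :
    peanoBaker A t t = 1 ∧
    ∀ s ∈ Set.Icc a t,
      HasDerivWithinAt (fun s' => peanoBaker A s' t)
        (-(A s * peanoBaker A s t)) (Set.Icc a t) s := by
  obtain ⟨M0, hM0b⟩ := (isCompact_Icc (a := a) (b := t)).exists_bound_of_continuousOn hA
  set M : ℝ := max M0 0 with hMdef
  have hM0 : (0 : ℝ) ≤ M := le_max_right _ _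
  set Ae : ℝ → Matrix (Fin J) (Fin J) ℝ := fun x => A (Set.projIcc a t hat x) with hAedef
  have hAe : Continuous Ae := by
    apply hA.comp_continuous (continuous_subtype_val.comp continuous_projIcc)
    exact fun x => (Set.projIcc a t hat x).2
  have hAeEq : ∀ x ∈ Set.Icc a t, Ae x = A x := by
    intro x hx
    simp only [hAedef, Set.projIcc_of_mem hat hx]
  have hMe : ∀ x, ‖Ae x‖ ≤ M :=
    fun x => le_trans (hM0b _ (Set.projIcc a t hat x).2) (le_max_left _ _)
  have htmem : t ∈ Set.Icc a t := Set.right_mem_Icc.mpr hat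
  have hpb : ∀ s ∈ Set.Icc a t, peanoBaker Ae s t = peanoBaker A s t := fun s hs =>
    tsum_congr fun m => iterInt_congr hAeEq m s hs t htmem
  refine ⟨peanoBaker_one A t, fun s hs => ?_⟩
  have hd := peanoBaker_hasDerivWithinAt_ext hAe hM0 hMe hs
  have hd' := hd.congr (fun y hy => (hpb y hy).symm) ((hpb s hs).symm)
  rw [hAeEq s hs, hpb s hs] at hd'
  exact hd'
end Main
end

section
/- Let A : ℝ → Matrix (Fin J) (Fin J) ℝ and f : ℝ → ℝ be continuous on [s,t], and set Ã(x) = A(x) − f(x)·Id. Then the Peano–Baker series of à satisfies ∏_s^t (Id + Ã(x)dx) = exp(−∫_s^t f(v) dv) · ∏_s^t (Id + A(x)dx). In particular, for an intensity matrix M and constant c ≥ 0, ∏_s^t (Id + [M(x) − c·r(x)·Id] dx) = e^{−c ∫_s^t r(v)dv} ∏_s^t (Id + M(x)dx). -/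
open MeasureTheory intervalIntegral

attribute [local instance] Matrix.linftyOpNormedAddCommGroup Matrix.linftyOpNormedSpace
  Matrix.linftyOpNormedRing Matrix.linftyOpNormedAlgebra

set_option maxHeartbeats 1000000

namespace PBAux

variable {J : ℕ}

local notation "Mat" => Matrix (Fin J) (Fin J) ℝ

lemma norm_one_le' : ‖(1 : Mat)‖ ≤ 1 := by
  rcases Nat.eq_zero_or_pos J with h | h
  · subst h
    have : (1 : Matrix (Fin 0) (Fin 0) ℝ) = 0 := Subsingleton.elim _ _
    simp [this]
  · haveI : Nonempty (Fin J) := ⟨⟨0, h⟩⟩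
    exact le_of_eq norm_one

lemma iterInt_succ (A : ℝ → Mat) (m : ℕ) (s t : ℝ) :
    iterInt A (m + 1) s t = ∫ x in s..t, iterInt A m s x * A x := rfl

lemma norm_iterInt_le {A : ℝ → Mat} (hA : Continuous A) {s t : ℝ} (hst : s ≤ t)
    {C : ℝ} (hC0 : 0 ≤ C) (hC : ∀ x ∈ Set.Icc s t, ‖A x‖ ≤ C) (m : ℕ) :
    ∀ x ∈ Set.Icc s t, ‖iterInt A m s x‖ ≤ C ^ m * (x - s) ^ m / m.factorial := by
  induction m with
  | zero => intro x hx; simpa [iterInt] using norm_one_le'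
  | succ m ih =>
    intro x hx
    have hsx : s ≤ x := hx.1
    have hle : ∀ u ∈ Set.uIoc s x, ‖iterInt A m s u * A u‖ ≤
        C ^ (m+1) * (u - s) ^ m / m.factorial := by
      intro u hu
      rw [Set.uIoc_of_le hsx] at hu
      have hu' : u ∈ Set.Icc s t := ⟨le_of_lt hu.1, le_trans hu.2 hx.2⟩
      calc ‖iterInt A m s u * A u‖ ≤ ‖iterInt A m s u‖ * ‖A u‖ := norm_mul_le _ _
        _ ≤ (C ^ m * (u - s) ^ m / m.factorial) * C := by
            have hus : (0:ℝ) ≤ u - s := by linarith [hu.1.le]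
            apply mul_le_mul (ih u hu') (hC u hu') (norm_nonneg _)
            positivity
        _ = C ^ (m+1) * (u - s) ^ m / m.factorial := by ring
    have hint : IntervalIntegrable (fun u => C ^ (m+1) * (u - s) ^ m / m.factorial)
        volume s x := by
      apply Continuous.intervalIntegrable; continuity
    calc ‖iterInt A (m+1) s x‖ ≤ |∫ u in s..x, C ^ (m+1) * (u - s) ^ m / m.factorial| := by
          rw [iterInt_succ]
          exact intervalIntegral.norm_integral_le_abs_of_norm_le
            (Filter.eventually_of_mem (self_mem_ae_restrict measurableSet_uIoc) hle) hint
      _ = ∫ u in s..x, C ^ (m+1) * (u - s) ^ m / m.factorial := by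
          apply abs_of_nonneg
          apply intervalIntegral.integral_nonneg hsx
          intro u hu
          have : (0:ℝ) ≤ u - s := by linarith [hu.1]
          positivity
      _ = C ^ (m+1) * (x - s) ^ (m+1) / (m+1).factorial := by
          have h1 : (∫ u in s..x, C ^ (m+1) * (u - s) ^ m / m.factorial)
              = (C ^ (m+1) / m.factorial) * ∫ u in s..x, (u - s) ^ m := by
            rw [← intervalIntegral.integral_const_mul]
            congr 1; ext u; ring
          have h2 : (∫ u in s..x, (u - s) ^ m) = (x - s) ^ (m+1) / (m+1) := by
            rw [intervalIntegral.integral_comp_sub_right (fun u => u ^ m) s]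
            simp [integral_pow]
          rw [h1, h2, Nat.factorial_succ]
          push_cast
          rw [div_mul_div_comm]
          congr 1
          ring

lemma continuous_iterInt {A : ℝ → Mat} (hA : Continuous A) (m : ℕ) (s : ℝ) :
    Continuous (fun x => iterInt A m s x) := by
  induction m with
  | zero => exact continuous_const
  | succ m ih =>
    exact intervalIntegral.continuous_primitive
      (fun a b => ((ih.mul hA)).intervalIntegrable a b) s

lemma hasDerivAt_iterInt {A : ℝ → Mat} (hA : Continuous A) (m : ℕ) (s x : ℝ) :
    HasDerivAt (fun u => iterInt A (m + 1) s u) (iterInt A m s x * A x) x := by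
  have hc : Continuous fun u => iterInt A m s u * A u :=
    (continuous_iterInt hA m s).mul hA
  haveI : TopologicalSpace.PseudoMetrizableSpace Mat :=
    inferInstanceAs (TopologicalSpace.PseudoMetrizableSpace (Fin J → Fin J → ℝ))
  exact intervalIntegral.integral_hasDerivAt_right (hc.intervalIntegrable s x)
    hc.aestronglyMeasurable.stronglyMeasurableAtFilter hc.continuousAt

lemma summable_norm_iterInt {A : ℝ → Mat} (hA : Continuous A) {s t : ℝ} (hst : s ≤ t) :
    Summable fun m => ‖iterInt A m s t‖ := by
  obtain ⟨C, hC⟩ := (isCompact_Icc (a := s) (b := t)).exists_bound_of_continuousOn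
    hA.continuousOn
  have hC0 : 0 ≤ max C 0 := le_max_right _ _
  have hC' : ∀ x ∈ Set.Icc s t, ‖A x‖ ≤ max C 0 := fun x hx => (hC x hx).trans (le_max_left _ _)
  apply Summable.of_nonneg_of_le (fun m => norm_nonneg _)
    (fun m => norm_iterInt_le hA hst hC0 hC' m t ⟨hst, le_refl t⟩)
  have := Real.summable_pow_div_factorial (max C 0 * (t - s))
  simpa [mul_pow] using this

lemma summable_iterInt {A : ℝ → Mat} (hA : Continuous A) {s t : ℝ} (hst : s ≤ t) :
    Summable fun m => iterInt A m s t :=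
  (summable_norm_iterInt hA hst).of_norm

/-- The primitive of `f` from `s`. -/
noncomputable def Fint (f : ℝ → ℝ) (s x : ℝ) : ℝ := ∫ v in s..x, f v

lemma hasDerivAt_Fint {f : ℝ → ℝ} (hf : Continuous f) (s x : ℝ) :
    HasDerivAt (Fint f s) (f x) x :=
  intervalIntegral.integral_hasDerivAt_right (hf.intervalIntegrable s x)
    hf.aestronglyMeasurable.stronglyMeasurableAtFilter hf.continuousAt

lemma continuous_Fint {f : ℝ → ℝ} (hf : Continuous f) (s : ℝ) : Continuous (Fint f s) :=
  intervalIntegral.continuous_primitive (fun a b => hf.intervalIntegrable a b) s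

/-- Integration by parts for `∫ F^(k+1) • (I_j A)`. -/
lemma ibp {A : ℝ → Mat} {f : ℝ → ℝ} (hA : Continuous A) (hf : Continuous f)
    (s : ℝ) (k j : ℕ) (x : ℝ) :
    (∫ u in s..x, (Fint f s u) ^ (k+1) • (iterInt A j s u * A u))
      = (Fint f s x) ^ (k+1) • iterInt A (j+1) s x
        - (k+1 : ℝ) • ∫ u in s..x, ((Fint f s u) ^ k * f u) • iterInt A (j+1) s u := by
  have hFc : Continuous (Fint f s) := continuous_Fint hf s
  have hIc : Continuous (fun u => iterInt A (j+1) s u) := continuous_iterInt hA (j+1) s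
  have hIc' : Continuous (fun u => iterInt A j s u * A u) := (continuous_iterInt hA j s).mul hA
  have hG : ∀ u, HasDerivAt (fun u => (Fint f s u) ^ (k+1) • iterInt A (j+1) s u)
      ((Fint f s u) ^ (k+1) • (iterInt A j s u * A u)
        + ((k+1 : ℝ) * (Fint f s u) ^ k * f u) • iterInt A (j+1) s u) u := by
    intro u
    have h1 : HasDerivAt (fun u => (Fint f s u) ^ (k+1))
        ((k+1 : ℝ) * (Fint f s u) ^ k * f u) u := by
      simpa using (hasDerivAt_Fint hf s u).fun_pow (k+1)
    exact h1.smul (hasDerivAt_iterInt hA j s u)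
  have hcont : Continuous fun u => (Fint f s u) ^ (k+1) • (iterInt A j s u * A u)
      + ((k+1 : ℝ) * (Fint f s u) ^ k * f u) • iterInt A (j+1) s u := by
    apply Continuous.add
    · exact (hFc.pow (k+1)).smul hIc'
    · exact ((continuous_const.mul (hFc.pow k)).mul hf).smul hIc
  have heq := intervalIntegral.integral_eq_sub_of_hasDerivAt
    (f := fun u => (Fint f s u) ^ (k+1) • iterInt A (j+1) s u)
    (fun u _ => hG u) (hcont.intervalIntegrable s x)
  have hFs : Fint f s s = 0 := intervalIntegral.integral_same
  have hIs : iterInt A (j+1) s s = 0 := intervalIntegral.integral_same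
  simp only [hFs, hIs, smul_zero, sub_zero] at heq
  have hsplit : (∫ u in s..x, ((Fint f s u) ^ (k+1) • (iterInt A j s u * A u)
      + ((k+1 : ℝ) * (Fint f s u) ^ k * f u) • iterInt A (j+1) s u))
      = (∫ u in s..x, (Fint f s u) ^ (k+1) • (iterInt A j s u * A u))
        + ∫ u in s..x, ((k+1 : ℝ) * (Fint f s u) ^ k * f u) • iterInt A (j+1) s u := by
    apply intervalIntegral.integral_add
    · exact ((hFc.pow (k+1)).smul hIc').intervalIntegrable s x
    · exact (((continuous_const.mul (hFc.pow k)).mul hf).smul hIc).intervalIntegrable s x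
  have hpull : (∫ u in s..x, ((k+1 : ℝ) * (Fint f s u) ^ k * f u) • iterInt A (j+1) s u)
      = (k+1 : ℝ) • ∫ u in s..x, ((Fint f s u) ^ k * f u) • iterInt A (j+1) s u := by
    rw [← intervalIntegral.integral_smul]
    congr 1; ext u; rw [mul_assoc, mul_smul]
  rw [hsplit, hpull] at heq
  exact eq_sub_of_add_eq heq

lemma term_expand {a c F g : ℝ} (h : a = c * F) (M N : Mat) :
    (a • M) * (N - g • 1) = c • (F • (M * N)) - c • ((F * g) • M) := by
  subst h
  simp only [smul_mul_assoc, mul_sub, mul_smul_comm, mul_one, smul_sub, smul_smul, mul_assoc]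
  rw [show g * (c * F) = c * (F * g) from by ring]

/-- The key identity: iterated integrals of `A - f • 1` in terms of those of `A`. -/
lemma key {A : ℝ → Mat} {f : ℝ → ℝ} (hA : Continuous A) (hf : Continuous f) (s : ℝ) :
    ∀ (m : ℕ) (x : ℝ), iterInt (fun u => A u - f u • (1 : Mat)) m s x
      = ∑ k ∈ Finset.range (m+1),
          (((-1:ℝ)^k * (Fint f s x)^k / k.factorial) • iterInt A (m-k) s x) := by
  intro m
  induction m with
  | zero => intro x; simp [iterInt]
  | succ m ih =>
    intro x
    have hAtc : Continuous fun u => A u - f u • (1 : Mat) :=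
      hA.sub (hf.smul continuous_const)
    have hFc : Continuous (Fint f s) := continuous_Fint hf s
    have hIc : ∀ j, Continuous fun u => iterInt A j s u := fun j => continuous_iterInt hA j s
    have hXc : ∀ k j, Continuous fun u =>
        ((-1:ℝ)^k / k.factorial) • ((Fint f s u)^k • (iterInt A j s u * A u)) :=
      fun k j => Continuous.fun_const_smul (g := fun u => (Fint f s u)^k • (iterInt A j s u * A u))
        ((hFc.fun_pow k).smul ((hIc j).fun_mul hA)) ((-1:ℝ)^k / k.factorial)
    have hYc : ∀ k j, Continuous fun u =>
        ((-1:ℝ)^k / k.factorial) • (((Fint f s u)^k * f u) • iterInt A j s u) :=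
      fun k j => Continuous.fun_const_smul (g := fun u => ((Fint f s u)^k * f u) • iterInt A j s u)
        (((hFc.fun_pow k).fun_mul hf).smul (hIc j)) ((-1:ℝ)^k / k.factorial)
    have hstep : iterInt (fun u => A u - f u • (1 : Mat)) (m+1) s x
        = ∑ k ∈ Finset.range (m+1),
            ((((-1:ℝ)^k / k.factorial) • ∫ u in s..x, (Fint f s u)^k • (iterInt A (m-k) s u * A u))
             - (((-1:ℝ)^k / k.factorial) • ∫ u in s..x, ((Fint f s u)^k * f u) • iterInt A (m-k) s u)) := by
      rw [iterInt_succ]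
      have hintegrand : (fun u => iterInt (fun u => A u - f u • (1 : Mat)) m s u
            * (A u - f u • (1 : Mat)))
          = fun u => ∑ k ∈ Finset.range (m+1),
              (((-1:ℝ)^k / k.factorial) • ((Fint f s u)^k • (iterInt A (m-k) s u * A u))
               - ((-1:ℝ)^k / k.factorial) • (((Fint f s u)^k * f u) • iterInt A (m-k) s u)) := by
        funext u
        rw [ih u, Finset.sum_mul]
        refine Finset.sum_congr rfl fun k _ => ?_
        exact term_expand (by ring) _ _
      rw [hintegrand]
      rw [intervalIntegral.integral_finset_sum
        (fun k _ => ((hXc k (m-k)).fun_sub (hYc k (m-k))).intervalIntegrable s x)]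
      refine Finset.sum_congr rfl fun k _ => ?_
      rw [intervalIntegral.integral_sub ((hXc k (m-k)).intervalIntegrable s x)
        ((hYc k (m-k)).intervalIntegrable s x),
        intervalIntegral.integral_smul, intervalIntegral.integral_smul]
    rw [hstep, Finset.sum_sub_distrib]
    have hsplit1 : (∑ k ∈ Finset.range (m+1), ((-1:ℝ)^k / k.factorial) •
          ∫ u in s..x, (Fint f s u)^k • (iterInt A (m-k) s u * A u))
        = iterInt A (m+1) s x
          + (∑ i ∈ Finset.range m,
              (((-1:ℝ)^(i+1) * (Fint f s x)^(i+1) / (i+1).factorial) • iterInt A (m-i) s x))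
          + ∑ i ∈ Finset.range m,
              (((-1:ℝ)^i / i.factorial) •
                ∫ u in s..x, ((Fint f s u)^i * f u) • iterInt A (m-i) s u) := by
      rw [Finset.sum_range_succ']
      have h0 : ((-1:ℝ)^0 / (Nat.factorial 0 : ℝ)) •
          (∫ u in s..x, (Fint f s u)^0 • (iterInt A (m-0) s u * A u)) = iterInt A (m+1) s x := by
        simp [iterInt_succ]
      rw [h0]
      have hterm : ∀ i ∈ Finset.range m,
          ((-1:ℝ)^(i+1) / ((i+1).factorial : ℝ)) •
            (∫ u in s..x, (Fint f s u)^(i+1) • (iterInt A (m-(i+1)) s u * A u))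
          = ((-1:ℝ)^(i+1) * (Fint f s x)^(i+1) / (i+1).factorial) • iterInt A (m-i) s x
            + ((-1:ℝ)^i / i.factorial) •
                ∫ u in s..x, ((Fint f s u)^i * f u) • iterInt A (m-i) s u := by
        intro i hi
        have him : i < m := Finset.mem_range.mp hi
        have hidx : m - (i+1) + 1 = m - i := by omega
        have hibp := ibp hA hf s i (m-(i+1)) x
        rw [hidx] at hibp
        rw [hibp, smul_sub, smul_smul, smul_smul, sub_eq_add_neg, ← neg_smul]
        congr 1
        · congr 1; ring
        · congr 1
          have hfac : ((i+1).factorial : ℝ) = (i+1) * i.factorial := by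
            rw [Nat.factorial_succ]; push_cast; ring
          have hne : (i.factorial : ℝ) ≠ 0 := Nat.cast_ne_zero.mpr i.factorial_ne_zero
          have hne' : ((i:ℝ)+1) ≠ 0 := by positivity
          rw [hfac]
          field_simp
          ring
      rw [Finset.sum_congr rfl hterm, Finset.sum_add_distrib]
      abel
    have hPm : (∫ u in s..x, ((Fint f s u)^m * f u) • iterInt A (m-m) s u)
        = ((Fint f s x)^(m+1) / (m+1)) • (1 : Mat) := by
      have hI0 : ∀ u, iterInt A (m-m) s u = 1 := by
        intro u; rw [Nat.sub_self]; rfl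
      simp only [hI0]
      rw [intervalIntegral.integral_smul_const]
      congr 1
      have hderiv : ∀ u, HasDerivAt (fun u => (Fint f s u)^(m+1) / (m+1))
          ((Fint f s u)^m * f u) u := by
        intro u
        have h1 : HasDerivAt (fun u => (Fint f s u)^(m+1))
            (((m:ℝ)+1) * (Fint f s u)^m * f u) u := by
          simpa using (hasDerivAt_Fint hf s u).fun_pow (m+1)
        have h2 := h1.div_const ((m:ℝ)+1)
        have hne : ((m:ℝ)+1) ≠ 0 := by positivity
        have : ((m:ℝ)+1) * (Fint f s u)^m * f u / ((m:ℝ)+1) = (Fint f s u)^m * f u := by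
          field_simp
        rwa [this] at h2
      rw [intervalIntegral.integral_eq_sub_of_hasDerivAt (fun u _ => hderiv u)
        ((((continuous_Fint hf s).pow m).mul hf).intervalIntegrable s x)]
      have hFs : Fint f s s = 0 := intervalIntegral.integral_same
      simp [hFs]
    have hsplit2 : (∑ k ∈ Finset.range (m+1), ((-1:ℝ)^k / k.factorial) •
          ∫ u in s..x, ((Fint f s u)^k * f u) • iterInt A (m-k) s u)
        = (∑ i ∈ Finset.range m,
            (((-1:ℝ)^i / i.factorial) •
              ∫ u in s..x, ((Fint f s u)^i * f u) • iterInt A (m-i) s u))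
          + (((-1:ℝ)^m / m.factorial) • (((Fint f s x)^(m+1) / (m+1)) • (1 : Mat))) := by
      rw [Finset.sum_range_succ, hPm]
    rw [hsplit1, hsplit2]
    -- now pure algebra + reindex of RHS
    have hRHS : (∑ k ∈ Finset.range (m+1+1),
          (((-1:ℝ)^k * (Fint f s x)^k / k.factorial) • iterInt A (m+1-k) s x))
        = iterInt A (m+1) s x
          + (∑ i ∈ Finset.range m,
              (((-1:ℝ)^(i+1) * (Fint f s x)^(i+1) / (i+1).factorial) • iterInt A (m-i) s x))
          + ((-1:ℝ)^(m+1) * (Fint f s x)^(m+1) / (m+1).factorial) • (1 : Mat) := by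
      rw [Finset.sum_range_succ']
      have h0 : ((-1:ℝ)^0 * (Fint f s x)^0 / (Nat.factorial 0 : ℝ)) • iterInt A (m+1-0) s x
          = iterInt A (m+1) s x := by simp
      rw [h0]
      have hidx : ∀ i, m + 1 - (i + 1) = m - i := fun i => Nat.succ_sub_succ m i
      have hre : ∀ i ∈ Finset.range (m+1),
          ((-1:ℝ)^(i+1) * (Fint f s x)^(i+1) / ((i+1).factorial : ℝ)) • iterInt A (m+1-(i+1)) s x
          = ((-1:ℝ)^(i+1) * (Fint f s x)^(i+1) / ((i+1).factorial : ℝ)) • iterInt A (m-i) s x := by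
        intro i _; rw [hidx i]
      rw [Finset.sum_congr rfl hre, Finset.sum_range_succ]
      have hlast : iterInt A (m - m) s x = (1 : Mat) := by rw [Nat.sub_self]; rfl
      rw [hlast]
      abel
    rw [hRHS]
    have hco : ((-1:ℝ)^(m+1) * (Fint f s x)^(m+1) / ((m+1).factorial : ℝ)) • (1 : Mat)
        = -(((-1:ℝ)^m / m.factorial) • (((Fint f s x)^(m+1) / (m+1)) • (1 : Mat))) := by
      rw [smul_smul, ← neg_smul]
      congr 1
      have hfac : ((m+1).factorial : ℝ) = (m+1) * m.factorial := by
        rw [Nat.factorial_succ]; push_cast; ring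
      have hne : (m.factorial : ℝ) ≠ 0 := Nat.cast_ne_zero.mpr m.factorial_ne_zero
      have hne' : ((m:ℝ)+1) ≠ 0 := by positivity
      rw [hfac]
      field_simp
      ring
    rw [hco]
    abel

lemma peanoBaker_shift_global {A : ℝ → Mat} {f : ℝ → ℝ} (hA : Continuous A) (hf : Continuous f)
    {s t : ℝ} (hst : s ≤ t) :
    (∑' m : ℕ, iterInt (fun x => A x - f x • (1 : Mat)) m s t)
      = Real.exp (-∫ v in s..t, f v) • ∑' m : ℕ, iterInt A m s t := by
  have hsb : Summable fun k => ‖(((-(∫ v in s..t, f v))^k / k.factorial) • (1 : Mat) : Mat)‖ := by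
    have h1 : ∀ k : ℕ, ‖(((-(∫ v in s..t, f v))^k / k.factorial) • (1 : Mat) : Mat)‖
        ≤ |(-(∫ v in s..t, f v))|^k / k.factorial := by
      intro k
      rw [norm_smul]
      calc ‖(-(∫ v in s..t, f v))^k / (k.factorial : ℝ)‖ * ‖(1 : Mat)‖
          ≤ ‖(-(∫ v in s..t, f v))^k / (k.factorial : ℝ)‖ * 1 :=
            mul_le_mul_of_nonneg_left norm_one_le' (norm_nonneg _)
        _ = |(-(∫ v in s..t, f v))|^k / k.factorial := by
            rw [mul_one, Real.norm_eq_abs, abs_div, abs_pow, Nat.abs_cast]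
    have h2 : Summable fun k : ℕ => |(-(∫ v in s..t, f v))|^k / (k.factorial : ℝ) :=
      Real.summable_pow_div_factorial _
    exact Summable.of_nonneg_of_le (fun k => norm_nonneg _) h1 h2
  have hsI : Summable fun m => ‖iterInt A m s t‖ := summable_norm_iterInt hA hst
  have hcauchy := tsum_mul_tsum_eq_tsum_sum_range_of_summable_norm hsb hsI
  have hbI : ∀ k j, ((-(∫ v in s..t, f v))^k / k.factorial) • (1 : Mat) * iterInt A j s t
      = (((-1:ℝ)^k * (∫ v in s..t, f v)^k / k.factorial)) • iterInt A j s t := by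
    intro k j
    rw [smul_mul_assoc, one_mul, neg_pow]
  have hLHS : (∑' m : ℕ, iterInt (fun x => A x - f x • (1 : Mat)) m s t)
      = ∑' n : ℕ, ∑ k ∈ Finset.range (n+1),
          ((-(∫ v in s..t, f v))^k / k.factorial) • (1 : Mat) * iterInt A (n-k) s t := by
    refine tsum_congr fun m => ?_
    rw [key hA hf s m t]
    exact Finset.sum_congr rfl fun k _ => (hbI k (m-k)).symm
  have hsumb : Summable fun k : ℕ => (-(∫ v in s..t, f v))^k / (k.factorial : ℝ) :=
    Real.summable_pow_div_factorial _
  have htsumb : (∑' k : ℕ, ((-(∫ v in s..t, f v))^k / k.factorial) • (1 : Mat))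
      = Real.exp (-(∫ v in s..t, f v)) • (1 : Mat) := by
    rw [hsumb.tsum_smul_const]
    congr 1
    rw [Real.exp_eq_exp_ℝ, NormedSpace.exp_eq_tsum_div]
  refine hLHS.trans (hcauchy.symm.trans ?_)
  erw [htsumb, smul_mul_assoc, one_mul]
  rfl

lemma iterInt_congr {A B : ℝ → Mat} {s t : ℝ} (hst : s ≤ t)
    (h : ∀ x ∈ Set.Icc s t, A x = B x) :
    ∀ m, ∀ x ∈ Set.Icc s t, iterInt A m s x = iterInt B m s x := by
  intro m
  induction m with
  | zero => intro x _; rfl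
  | succ m ih =>
    intro x hx
    rw [iterInt_succ, iterInt_succ]
    apply intervalIntegral.integral_congr
    intro u hu
    rw [Set.uIcc_of_le hx.1] at hu
    have hu' : u ∈ Set.Icc s t := ⟨hu.1, hu.2.trans hx.2⟩
    show iterInt A m s u * A u = iterInt B m s u * B u
    rw [ih u hu', h u hu']

end PBAux

/-- shifting a matrix function by a scalar multiple of the identity factors
out of the product integral as an exponential:
`∏_s^t (Id + [A(x) − f(x)·Id] dx) = exp(−∫_s^t f) · ∏_s^t (Id + A(x) dx)`.
In particular, for an intensity matrix `M` and a constant `c ≥ 0`,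
`∏_s^t (Id + [M(x) − c·r(x)·Id] dx) = e^{−c ∫_s^t r} ∏_s^t (Id + M(x) dx)`. -/
theorem peanoBaker_scalar_shift {J : ℕ}
    (A : ℝ → Matrix (Fin J) (Fin J) ℝ) (f : ℝ → ℝ) (s t : ℝ) (hst : s ≤ t)
    (hA : ContinuousOn A (Set.Icc s t)) (hf : ContinuousOn f (Set.Icc s t)) :
    (peanoBaker (fun x => A x - f x • (1 : Matrix (Fin J) (Fin J) ℝ)) s t
      = Real.exp (-∫ v in s..t, f v) • peanoBaker A s t) ∧
    (∀ (M : ℝ → Matrix (Fin J) (Fin J) ℝ) (r : ℝ → ℝ) (c : ℝ), 0 ≤ c →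
      ContinuousOn M (Set.Icc s t) → ContinuousOn r (Set.Icc s t) →
      peanoBaker (fun x => M x - (c * r x) • (1 : Matrix (Fin J) (Fin J) ℝ)) s t
        = Real.exp (-(c * ∫ v in s..t, r v)) • peanoBaker M s t) := by
  have main : ∀ (A : ℝ → Matrix (Fin J) (Fin J) ℝ) (f : ℝ → ℝ),
      ContinuousOn A (Set.Icc s t) → ContinuousOn f (Set.Icc s t) →
      peanoBaker (fun x => A x - f x • (1 : Matrix (Fin J) (Fin J) ℝ)) s t
        = Real.exp (-∫ v in s..t, f v) • peanoBaker A s t := by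
    intro A f hA hf
    set A' : ℝ → Matrix (Fin J) (Fin J) ℝ := Set.IccExtend hst ((Set.Icc s t).restrict A)
      with hA'def
    set f' : ℝ → ℝ := Set.IccExtend hst ((Set.Icc s t).restrict f) with hf'def
    have hA'c : Continuous A' := hA.restrict.Icc_extend'
    have hf'c : Continuous f' := hf.restrict.Icc_extend'
    have hAeq : ∀ x ∈ Set.Icc s t, A x = A' x := fun x hx =>
      (Set.IccExtend_of_mem hst ((Set.Icc s t).restrict A) hx).symm
    have hfeq : ∀ x ∈ Set.Icc s t, f x = f' x := fun x hx =>
      (Set.IccExtend_of_mem hst ((Set.Icc s t).restrict f) hx).symm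
    have h1 : peanoBaker (fun x => A x - f x • (1 : Matrix (Fin J) (Fin J) ℝ)) s t
        = peanoBaker (fun x => A' x - f' x • (1 : Matrix (Fin J) (Fin J) ℝ)) s t := by
      unfold peanoBaker
      apply tsum_congr; intro m
      exact PBAux.iterInt_congr hst (fun x hx => by rw [hAeq x hx, hfeq x hx]) m t ⟨hst, le_rfl⟩
    have h2 : peanoBaker A s t = peanoBaker A' s t :=
      tsum_congr fun m => PBAux.iterInt_congr hst hAeq m t ⟨hst, le_rfl⟩
    have h3 : (∫ v in s..t, f v) = ∫ v in s..t, f' v := by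
      apply intervalIntegral.integral_congr
      intro u hu; rw [Set.uIcc_of_le hst] at hu; exact hfeq u hu
    rw [h1, h2, h3]
    unfold peanoBaker
    exact PBAux.peanoBaker_shift_global hA'c hf'c hst
  refine ⟨main A f hA hf, ?_⟩
  intro M r c hc hM hr
  have := main M (fun x => c * r x) hM (continuousOn_const.mul hr)
  rwa [intervalIntegral.integral_const_mul] at this
end

section
/- Fix k ∈ ℕ^n and continuous r, intensity matrix M and continuous payments as in the setup. Suppose the matrix-valued functions V^{(y)}(·,t) : [0,t] → Matrix (Fin J) (Fin J) ℝ, y ∈ S̃(k), satisfy the backward matrix moment ODE system: ∂/∂s V^{(y)}(s,t) = ( ȳ r(s) Id − M(s) ) V^{(y)}(s,t) − ∑_ℓ y_ℓ R_ℓ(s) V^{(y−e_ℓ)}(s,t) − ∑_{ξ ∈ S(y), ξ ∉ E_n} ( ∏_ℓ C(y_ℓ, ξ_ℓ) ) C^{(ξ)}(s) V^{(y−ξ)}(s,t), with V^{(y)}(t,t) = 𝟙(y=0)·Id. Define the scalar functions V_i^{(y)}(s,t) := (V^{(y)}(s,t)·𝟙)_i, where 𝟙 = (1,…,1)'. Then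 for every y ∈ S̃(k) and i ∈ {0,…,J−1}: ∂/∂s V_i^{(y)}(s,t) = ( ȳ r(s) + μ_{i·}(s) ) V_i^{(y)}(s,t) − ∑_{ℓ=1}^n y_ℓ b^ℓ_i(s) V_i^{(y−e_ℓ)}(s,t) − ∑_{j≠i} μ_{ij}(s) ∑_{ξ ∈ S̃(y)} ( ∏_ℓ C(y_ℓ, ξ_ℓ) (b^ℓ_{ij}(s))^{ξ_ℓ} ) V_j^{(y−ξ)}(s,t), with V_i^{(y)}(t,t) = 𝟙(y=0), where μ_{i·}(s) = ∑_{j≠i} μ_{ij}(s). -/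
open MeasureTheory intervalIntegral

attribute [local instance] Matrix.linftyOpNormedAddCommGroup Matrix.linftyOpNormedSpace
  Matrix.linftyOpNormedRing Matrix.linftyOpNormedAlgebra

/-- The intensity matrix `M(s)` with off-diagonal entries `μ_{ij}(s)` and diagonal
entries `−∑_{j≠i} μ_{ij}(s)`. -/
noncomputable def intensity {J : ℕ} (μ : Fin J → Fin J → ℝ → ℝ) (s : ℝ) :
    Matrix (Fin J) (Fin J) ℝ :=
  Matrix.of fun i j => if i = j then -(∑ j' ∈ Finset.univ.erase i, μ i j' s) else μ i j s

/-- The matrix `B_ℓ(s) = {b^ℓ_{ij}(s)}_{i,j}` of transition payments. -/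
def Bmat {J n : ℕ} (bt : Fin n → Fin J → Fin J → ℝ → ℝ) (ℓ : Fin n) (s : ℝ) :
    Matrix (Fin J) (Fin J) ℝ :=
  Matrix.of fun i j => bt ℓ i j s

/-- `R_ℓ(s) = M(s) ∘ B_ℓ(s) + Δ(b^ℓ(s))` (Hadamard product plus diagonal of sojourn rates). -/
noncomputable def Rmat {J n : ℕ} (μ : Fin J → Fin J → ℝ → ℝ)
    (bt : Fin n → Fin J → Fin J → ℝ → ℝ) (bs : Fin n → Fin J → ℝ → ℝ)
    (ℓ : Fin n) (s : ℝ) : Matrix (Fin J) (Fin J) ℝ :=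
  Matrix.hadamard (intensity μ s) (Bmat bt ℓ s) + Matrix.diagonal (fun i => bs ℓ i s)

/-- `C^{(y)}(s) = M(s) ∘ B₁(s)^{∘y₁} ∘ ⋯ ∘ Bₙ(s)^{∘yₙ}`. -/
noncomputable def Cmat {J n : ℕ} (μ : Fin J → Fin J → ℝ → ℝ)
    (bt : Fin n → Fin J → Fin J → ℝ → ℝ) (y : Fin n → ℕ) (s : ℝ) :
    Matrix (Fin J) (Fin J) ℝ :=
  Matrix.hadamard (intensity μ s) (Matrix.of fun i j => ∏ ℓ, (bt ℓ i j s) ^ (y ℓ))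

/-- `S̃(x) = S(x) ∪ {0}`, i.e. all multi-indices componentwise below `x`. -/
def Stil {n : ℕ} (x : Fin n → ℕ) : Finset (Fin n → ℕ) := Finset.Iic x

/-- The matrix `A(s,u;θ) = M(u) ∘ {exp(v(s,u)⟨θ,b_{ij}(u)⟩)}_{ij} + v(s,u) ∑_ℓ θ_ℓ Δ(b^ℓ(u))`,
where `v(s,u) = exp(−∫_s^u r)`. -/
noncomputable def Amat {J n : ℕ} (r : ℝ → ℝ) (μ : Fin J → Fin J → ℝ → ℝ)
    (bt : Fin n → Fin J → Fin J → ℝ → ℝ) (bs : Fin n → Fin J → ℝ → ℝ)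
    (s u : ℝ) (θ : Fin n → ℝ) : Matrix (Fin J) (Fin J) ℝ :=
  Matrix.of (fun i j => intensity μ u i j *
      Real.exp (Real.exp (-∫ x in s..u, r x) * ∑ ℓ, θ ℓ * bt ℓ i j u))
    + Real.exp (-∫ x in s..u, r x) • ∑ ℓ, θ ℓ • Matrix.diagonal (fun i => bs ℓ i u)

/-- The right-hand side of the backward matrix moment ODE system:
`(ȳ r(s) Id − M(s)) V^{(y)} − ∑_ℓ y_ℓ R_ℓ(s) V^{(y−e_ℓ)}
  − ∑_{ξ ∈ S(y), ξ ∉ E_n} (∏_ℓ C(y_ℓ,ξ_ℓ)) C^{(ξ)}(s) V^{(y−ξ)}`,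
as (−1) times the `s`-derivative, i.e. this is exactly `∂/∂s V^{(y)}(s,t)`. -/
noncomputable def momentRHS {J n : ℕ} (r : ℝ → ℝ) (μ : Fin J → Fin J → ℝ → ℝ)
    (bt : Fin n → Fin J → Fin J → ℝ → ℝ) (bs : Fin n → Fin J → ℝ → ℝ)
    (V : (Fin n → ℕ) → ℝ → Matrix (Fin J) (Fin J) ℝ)
    (y : Fin n → ℕ) (s : ℝ) : Matrix (Fin J) (Fin J) ℝ :=
  ((∑ ℓ, (y ℓ : ℝ)) * r s) • V y s - intensity μ s * V y s
    - ∑ ℓ, (y ℓ : ℝ) • (Rmat μ bt bs ℓ s * V (y - Pi.single ℓ 1) s)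
    - ∑ ξ ∈ (Sfin y).filter (fun ξ => ¬ ∃ ℓ, ξ = Pi.single ℓ 1),
        (∏ ℓ, ((y ℓ).choose (ξ ℓ) : ℝ)) • (Cmat μ bt ξ s * V (y - ξ) s)

lemma key {J n : ℕ} (r : ℝ → ℝ) (μ : Fin J → Fin J → ℝ → ℝ)
    (bt : Fin n → Fin J → Fin J → ℝ → ℝ) (bs : Fin n → Fin J → ℝ → ℝ)
    (hbt0 : ∀ ℓ i s, bt ℓ i i s = 0)
    (V : (Fin n → ℕ) → ℝ → Matrix (Fin J) (Fin J) ℝ)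
    (y : Fin n → ℕ) (s : ℝ) (i : Fin J) :
    ∑ j, momentRHS r μ bt bs V y s i j
      = ((∑ ℓ, (y ℓ : ℝ)) * r s + ∑ j ∈ Finset.univ.erase i, μ i j s) * (∑ j, V y s i j)
        - (∑ ℓ, (y ℓ : ℝ) * bs ℓ i s * ∑ j, V (y - Pi.single ℓ 1) s i j)
        - ∑ j ∈ Finset.univ.erase i, μ i j s *
            ∑ ξ ∈ Stil y,
              (∏ ℓ, ((y ℓ).choose (ξ ℓ) : ℝ) * (bt ℓ i j s) ^ (ξ ℓ))
                * ∑ j', V (y - ξ) s j j' := by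
  classical
  -- Step 1: expand the entrywise sum of momentRHS
  have step1 : ∑ j, momentRHS r μ bt bs V y s i j
      = ((∑ ℓ, (y ℓ : ℝ)) * r s) * (∑ j, V y s i j)
        - (∑ k, intensity μ s i k * ∑ j, V y s k j)
        - (∑ ℓ, (y ℓ : ℝ) * ∑ k, Rmat μ bt bs ℓ s i k * ∑ j, V (y - Pi.single ℓ 1) s k j)
        - (∑ ξ ∈ (Sfin y).filter (fun ξ => ¬ ∃ ℓ, ξ = Pi.single ℓ 1),
            (∏ ℓ, ((y ℓ).choose (ξ ℓ) : ℝ)) * ∑ k, Cmat μ bt ξ s i k * ∑ j, V (y - ξ) s k j) := by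
    unfold momentRHS
    simp only [Matrix.sub_apply, Matrix.smul_apply, smul_eq_mul, Matrix.sum_apply,
      Matrix.mul_apply, Finset.sum_sub_distrib]
    congr 1
    congr 1
    congr 1
    · exact (Finset.mul_sum _ _ _).symm
    · rw [Finset.sum_comm]
      exact Finset.sum_congr rfl fun k _ => (Finset.mul_sum _ _ _).symm
    · rw [Finset.sum_comm]
      refine Finset.sum_congr rfl fun ℓ _ => ?_
      rw [← Finset.mul_sum]
      congr 1
      rw [Finset.sum_comm]
      exact Finset.sum_congr rfl fun k _ => (Finset.mul_sum _ _ _).symm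
    · rw [Finset.sum_comm]
      refine Finset.sum_congr rfl fun ξ _ => ?_
      rw [← Finset.mul_sum]
      congr 1
      rw [Finset.sum_comm]
      exact Finset.sum_congr rfl fun k _ => (Finset.mul_sum _ _ _).symm
  -- Step 2: intensity row
  have step2 : ∑ k, intensity μ s i k * ∑ j, V y s k j
      = -(∑ j ∈ Finset.univ.erase i, μ i j s) * (∑ j, V y s i j)
        + ∑ k ∈ Finset.univ.erase i, μ i k s * ∑ j, V y s k j := by
    rw [← Finset.add_sum_erase _ _ (Finset.mem_univ i)]
    congr 1
    · simp [intensity]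
    · refine Finset.sum_congr rfl fun k hk => ?_
      have h1 : ¬ i = k := fun h => (Finset.mem_erase.mp hk).1 h.symm
      simp [intensity, h1]
  -- Step 3: Rmat row
  have step3 : ∀ (W : Fin J → ℝ) (ℓ : Fin n),
      ∑ k, Rmat μ bt bs ℓ s i k * W k
        = bs ℓ i s * W i + ∑ k ∈ Finset.univ.erase i, μ i k s * bt ℓ i k s * W k := by
    intro W ℓ
    rw [← Finset.add_sum_erase _ _ (Finset.mem_univ i)]
    congr 1
    · simp [Rmat, Matrix.hadamard_apply, Bmat, Matrix.diagonal_apply_eq, hbt0]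
    · refine Finset.sum_congr rfl fun k hk => ?_
      have h1 : ¬ i = k := fun h => (Finset.mem_erase.mp hk).1 h.symm
      simp [Rmat, Matrix.hadamard_apply, Bmat, Matrix.diagonal_apply_ne _ h1, intensity, h1]
  -- Step 4: Cmat row
  have step4 : ∀ (W : Fin J → ℝ) (ξ : Fin n → ℕ), ξ ≠ 0 →
      ∑ k, Cmat μ bt ξ s i k * W k
        = ∑ k ∈ Finset.univ.erase i, μ i k s * (∏ ℓ, bt ℓ i k s ^ ξ ℓ) * W k := by
    intro W ξ hξ
    rw [← Finset.add_sum_erase _ _ (Finset.mem_univ i)]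
    have : Cmat μ bt ξ s i i = 0 := by
      obtain ⟨ℓ0, hℓ0⟩ := Function.ne_iff.mp hξ
      have : (∏ ℓ, bt ℓ i i s ^ ξ ℓ) = 0 :=
        Finset.prod_eq_zero (Finset.mem_univ ℓ0) (by simp [hbt0, zero_pow hℓ0])
      simp [Cmat, Matrix.hadamard_apply, this]
    rw [this, zero_mul, zero_add]
    refine Finset.sum_congr rfl fun k hk => ?_
    have h1 : ¬ i = k := fun h => (Finset.mem_erase.mp hk).1 h.symm
    simp [Cmat, Matrix.hadamard_apply, intensity, h1]
  -- Abbreviation for the per-ξ term in the target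
  set H : (Fin n → ℕ) → ℝ := fun ξ =>
    ∑ k ∈ Finset.univ.erase i, μ i k s *
      ((∏ ℓ, ((y ℓ).choose (ξ ℓ) : ℝ) * bt ℓ i k s ^ ξ ℓ) * ∑ j', V (y - ξ) s k j') with hH
  -- Step 5a: target third term = ∑ ξ ∈ Stil y, H ξ
  have step5a : (∑ j ∈ Finset.univ.erase i, μ i j s *
        ∑ ξ ∈ Stil y,
          (∏ ℓ, ((y ℓ).choose (ξ ℓ) : ℝ) * (bt ℓ i j s) ^ (ξ ℓ)) * ∑ j', V (y - ξ) s j j')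
      = ∑ ξ ∈ Stil y, H ξ := by
    rw [show (∑ j ∈ Finset.univ.erase i, μ i j s *
        ∑ ξ ∈ Stil y,
          (∏ ℓ, ((y ℓ).choose (ξ ℓ) : ℝ) * (bt ℓ i j s) ^ (ξ ℓ)) * ∑ j', V (y - ξ) s j j')
      = ∑ j ∈ Finset.univ.erase i, ∑ ξ ∈ Stil y, μ i j s *
          ((∏ ℓ, ((y ℓ).choose (ξ ℓ) : ℝ) * (bt ℓ i j s) ^ (ξ ℓ)) * ∑ j', V (y - ξ) s j j')
      from Finset.sum_congr rfl fun j _ => Finset.mul_sum _ _ _]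
    exact Finset.sum_comm
  -- Step 5b: partition of Stil y
  have h0mem : (0 : Fin n → ℕ) ∈ Finset.Iic y := Finset.mem_Iic.mpr zero_le
  have step5b : ∑ ξ ∈ Stil y, H ξ
      = H 0 + ((∑ ξ ∈ (Sfin y).filter (fun ξ => ∃ ℓ, ξ = Pi.single ℓ 1), H ξ)
        + ∑ ξ ∈ (Sfin y).filter (fun ξ => ¬ ∃ ℓ, ξ = Pi.single ℓ 1), H ξ) := by
    rw [Finset.sum_filter_add_sum_filter_not]
    show ∑ ξ ∈ Finset.Iic y, H ξ = H 0 + ∑ ξ ∈ (Finset.Iic y).erase 0, H ξ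
    rw [← Finset.insert_erase h0mem, Finset.sum_insert (Finset.notMem_erase 0 _),
      Finset.erase_insert (Finset.notMem_erase 0 _)]
  -- Step 5c: the ξ = 0 term
  have step5c : H 0 = ∑ k ∈ Finset.univ.erase i, μ i k s * ∑ j, V y s k j := by
    simp [hH]
  -- Step 5d: the unit-vector terms
  have hinj : ∀ a ∈ Finset.univ.filter (fun ℓ => 1 ≤ y ℓ),
      ∀ b ∈ Finset.univ.filter (fun ℓ => 1 ≤ y ℓ),
      (Pi.single a 1 : Fin n → ℕ) = Pi.single b 1 → a = b := by
    intro a _ b _ h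
    by_contra hab
    have h2 := congrFun h a
    rw [Pi.single_eq_same, Pi.single_eq_of_ne hab] at h2
    exact one_ne_zero h2
  have himg : (Sfin y).filter (fun ξ => ∃ ℓ, ξ = Pi.single ℓ 1)
      = Finset.image (fun ℓ => (Pi.single ℓ 1 : Fin n → ℕ))
          (Finset.univ.filter fun ℓ => 1 ≤ y ℓ) := by
    ext ξ
    simp only [Finset.mem_filter, Finset.mem_image, Finset.mem_univ, true_and, Sfin,
      Finset.mem_erase, Finset.mem_Iic]
    constructor
    · rintro ⟨⟨hne, hle⟩, ℓ, rfl⟩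
      refine ⟨ℓ, ?_, rfl⟩
      have := (Pi.le_def.mp hle) ℓ
      simpa using this
    · rintro ⟨ℓ, hℓ, rfl⟩
      refine ⟨⟨?_, ?_⟩, ⟨ℓ, rfl⟩⟩
      · intro h
        have := congrFun h ℓ
        simp at this
      · refine Pi.le_def.mpr fun m => ?_
        by_cases hm : m = ℓ
        · subst hm; simpa using hℓ
        · simp [Pi.single_eq_of_ne hm]
  have step5d : ∑ ξ ∈ (Sfin y).filter (fun ξ => ∃ ℓ, ξ = Pi.single ℓ 1), H ξ
      = ∑ ℓ, (y ℓ : ℝ) *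
          ∑ k ∈ Finset.univ.erase i, μ i k s * bt ℓ i k s * ∑ j, V (y - Pi.single ℓ 1) s k j := by
    rw [himg, Finset.sum_image hinj]
    symm
    rw [← Finset.sum_filter_of_ne (p := fun ℓ => 1 ≤ y ℓ) ?side]
    · refine Finset.sum_congr rfl fun ℓ hℓ => ?_
      have hprod : ∀ k, (∏ m, ((y m).choose ((Pi.single ℓ 1 : Fin n → ℕ) m) : ℝ)
            * bt m i k s ^ ((Pi.single ℓ 1 : Fin n → ℕ) m)) = (y ℓ : ℝ) * bt ℓ i k s := by
        intro k
        rw [Finset.prod_eq_single ℓ]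
        · simp [Pi.single_eq_same, Nat.choose_one_right]
        · intro m _ hm
          simp [Pi.single_eq_of_ne hm]
        · simp
      simp only [hH]
      rw [Finset.mul_sum]
      refine Finset.sum_congr rfl fun k _ => ?_
      rw [hprod k]
      ring
    · intro ℓ _ hne
      by_contra hy1
      have : y ℓ = 0 := by omega
      simp [this] at hne
  -- Step 5e / e4 : the non-unit terms
  have e4 : ∑ ξ ∈ (Sfin y).filter (fun ξ => ¬ ∃ ℓ, ξ = Pi.single ℓ 1),
        (∏ ℓ, ((y ℓ).choose (ξ ℓ) : ℝ)) * ∑ k, Cmat μ bt ξ s i k * ∑ j, V (y - ξ) s k j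
      = ∑ ξ ∈ (Sfin y).filter (fun ξ => ¬ ∃ ℓ, ξ = Pi.single ℓ 1), H ξ := by
    refine Finset.sum_congr rfl fun ξ hξ => ?_
    have hξ0 : ξ ≠ 0 := (Finset.mem_erase.mp (Finset.mem_filter.mp hξ).1).1
    rw [step4 _ ξ hξ0, Finset.mul_sum]
    simp only [hH]
    refine Finset.sum_congr rfl fun k _ => ?_
    rw [Finset.prod_mul_distrib]
    ring
  -- e3 : the Rmat terms
  have e3 : ∑ ℓ, (y ℓ : ℝ) * ∑ k, Rmat μ bt bs ℓ s i k * ∑ j, V (y - Pi.single ℓ 1) s k j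
      = (∑ ℓ, (y ℓ : ℝ) * bs ℓ i s * ∑ j, V (y - Pi.single ℓ 1) s i j)
        + ∑ ℓ, (y ℓ : ℝ) *
            ∑ k ∈ Finset.univ.erase i, μ i k s * bt ℓ i k s * ∑ j, V (y - Pi.single ℓ 1) s k j := by
    rw [← Finset.sum_add_distrib]
    refine Finset.sum_congr rfl fun ℓ _ => ?_
    rw [step3]
    ring
  rw [step1, step2, e3, e4, step5a, step5b, step5c, step5d]
  ring

/-- if the matrix partial moments `V^{(y)}(·,t)`, `y ∈ S̃(k)`, satisfy the
backward matrix moment ODE system with terminal conditions `V^{(y)}(t,t) = 𝟙(y=0)·Id`,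
then the state-wise conditional moments `V_i^{(y)}(s,t) = (V^{(y)}(s,t)·𝟙)_i` satisfy
the scalar backward moment equations with terminal conditions `V_i^{(y)}(t,t) = 𝟙(y=0)`. -/
theorem statewise_moments_ode {J n : ℕ} (r : ℝ → ℝ) (μ : Fin J → Fin J → ℝ → ℝ)
    (bt : Fin n → Fin J → Fin J → ℝ → ℝ) (bs : Fin n → Fin J → ℝ → ℝ)
    (hr : Continuous r)
    (hμc : ∀ i j, Continuous (μ i j))
    (hμ0 : ∀ i j, i ≠ j → ∀ s, 0 ≤ μ i j s)
    (hbtc : ∀ ℓ i j, Continuous (bt ℓ i j))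
    (hbsc : ∀ ℓ i, Continuous (bs ℓ i))
    (hbt0 : ∀ ℓ i s, bt ℓ i i s = 0)
    (t : ℝ) (k : Fin n → ℕ)
    (V : (Fin n → ℕ) → ℝ → Matrix (Fin J) (Fin J) ℝ)
    (hode : ∀ y ∈ Stil k, ∀ s : ℝ, s ≤ t →
      HasDerivAt (V y) (momentRHS r μ bt bs V y s) s)
    (hterm : ∀ y ∈ Stil k, V y t = if y = 0 then 1 else 0) :
    ∀ y ∈ Stil k, ∀ i : Fin J,
      (∀ s : ℝ, s ≤ t →
        HasDerivAt (fun s' => ∑ j, V y s' i j)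
          (((∑ ℓ, (y ℓ : ℝ)) * r s + ∑ j ∈ Finset.univ.erase i, μ i j s) * (∑ j, V y s i j)
            - (∑ ℓ, (y ℓ : ℝ) * bs ℓ i s * ∑ j, V (y - Pi.single ℓ 1) s i j)
            - ∑ j ∈ Finset.univ.erase i, μ i j s *
                ∑ ξ ∈ Stil y,
                  (∏ ℓ, ((y ℓ).choose (ξ ℓ) : ℝ) * (bt ℓ i j s) ^ (ξ ℓ))
                    * ∑ j' , V (y - ξ) s j j') s) ∧
      (∑ j, V y t i j) = if y = 0 then 1 else 0 := by
  classical
  intro y hy i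
  refine ⟨fun s hs => ?_, ?_⟩
  · have hM := hode y hy s hs
    let Lm : Matrix (Fin J) (Fin J) ℝ →ₗ[ℝ] ℝ :=
      { toFun := fun A => ∑ j, A i j
        map_add' := fun A B => by simp [Finset.sum_add_distrib]
        map_smul' := fun c A => by simp [Finset.mul_sum] }
    have hL : HasDerivAt (fun s' => ∑ j, V y s' i j)
        (∑ j, momentRHS r μ bt bs V y s i j) s := by
      have h2 := (Lm.toContinuousLinearMap.hasFDerivAt (x := V y s)).comp_hasDerivAt s hM
      exact h2
    have hk := key r μ bt bs hbt0 V y s i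
    exact hk ▸ hL
  · rw [hterm y hy]
    by_cases h : y = 0
    · simp [h, Matrix.one_apply]
    · simp [h]
end

section
/- Fix ℓ ≠ m in {1,…,n}, continuous r, μ_{ij} and continuous payments b^ℓ_i, b^ℓ_{ij}, b^m_i, b^m_{ij} as in the setup. Suppose that for each i ∈ {0,…,J−1} the functions V_i^{(ℓ)}, V_i^{(m)} : [0,t] → ℝ satisfy Thiele's differential equations ∂/∂s V_i^{(ℓ)}(s,t) = r(s) V_i^{(ℓ)}(s,t) − b^ℓ_i(s) − ∑_{j≠i} μ_{ij}(s) R^ℓ_{ij}(s) with V_i^{(ℓ)}(t,t) = 0, where R^ℓ_{ij}(s) = b^ℓ_{ij}(s) + V_j^{(ℓ)}(s,t) − V_i^{(ℓ)}(s,t) (and analogously for m), and that V_i^{(ℓ,m)} satisfies the product-moment equation ∂/∂s V_i^{(ℓ,m)}(s,t) = (2r(s) + μ_{i·}(s)) V_i^{(ℓ,m)}(s,t) − b^ℓ_i(s) V_i^{(m)}(s,t) − b^m_i(s) V_i^{(ℓ)}(s,t) − ∑_{j≠i} μ_{ij}(s) ( V_j^{(ℓ,m)}(s,t) + b^ℓ_{ij}(s)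 V_j^{(m)}(s,t) + b^m_{ij}(s) V_j^{(ℓ)}(s,t) + b^ℓ_{ij}(s) b^m_{ij}(s) ), with V_i^{(ℓ,m)}(t,t) = 0 and μ_{i·}(s) = ∑_{j≠i} μ_{ij}(s). Define m_i(s,t) := V_i^{(ℓ,m)}(s,t) − V_i^{(ℓ)}(s,t) V_i^{(m)}(s,t). Then for each i, ∂/∂s m_i(s,t) = 2 r(s) m_i(s,t) − ∑_{j≠i} μ_{ij}(s) ( R^ℓ_{ij}(s) R^m_{ij}(s) + m_j(s,t) − m_i(s,t) ), with terminal condition m_i(t,t) = 0. -/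
/-- if the state-wise prospective reserves `V^{(ℓ)}_i`, `V^{(m)}_i` satisfy
Thiele's differential equations and the product moments `V^{(ℓ,m)}_i` satisfy the
product-moment equation, then the conditional covariances
`m_i(s,t) = V^{(ℓ,m)}_i(s,t) − V^{(ℓ)}_i(s,t) V^{(m)}_i(s,t)` satisfy
`∂/∂s m_i = 2 r(s) m_i − ∑_{j≠i} μ_{ij}(s) (R^ℓ_{ij} R^m_{ij} + m_j − m_i)`
with terminal condition `m_i(t,t) = 0`, where
`R^ℓ_{ij}(s) = b^ℓ_{ij}(s) + V^{(ℓ)}_j(s,t) − V^{(ℓ)}_i(s,t)` is the sum at risk. -/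
theorem covariance_thiele {J n : ℕ} (r : ℝ → ℝ) (μ : Fin J → Fin J → ℝ → ℝ)
    (bt : Fin n → Fin J → Fin J → ℝ → ℝ) (bs : Fin n → Fin J → ℝ → ℝ)
    (hr : Continuous r)
    (hμc : ∀ i j, Continuous (μ i j))
    (hμ0 : ∀ i j, i ≠ j → ∀ s, 0 ≤ μ i j s)
    (hbtc : ∀ ℓ' i j, Continuous (bt ℓ' i j))
    (hbsc : ∀ ℓ' i, Continuous (bs ℓ' i))
    (hbt0 : ∀ ℓ' i s, bt ℓ' i i s = 0)
    (ℓ m : Fin n) (hℓm : ℓ ≠ m) (t : ℝ)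
    (Vℓ Vm Vℓm : Fin J → ℝ → ℝ)
    -- Thiele's differential equation for the ℓ-th payment process:
    (hThℓ : ∀ i, ∀ s : ℝ, s ≤ t →
      HasDerivAt (Vℓ i)
        (r s * Vℓ i s - bs ℓ i s
          - ∑ j ∈ Finset.univ.erase i, μ i j s * (bt ℓ i j s + Vℓ j s - Vℓ i s)) s)
    (htermℓ : ∀ i, Vℓ i t = 0)
    -- Thiele's differential equation for the m-th payment process:
    (hThm : ∀ i, ∀ s : ℝ, s ≤ t →
      HasDerivAt (Vm i)
        (r s * Vm i s - bs m i s
          - ∑ j ∈ Finset.univ.erase i, μ i j s * (bt m i j s + Vm j s - Vm i s)) s)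
    (htermm : ∀ i, Vm i t = 0)
    -- the product-moment differential equation:
    (hprod : ∀ i, ∀ s : ℝ, s ≤ t →
      HasDerivAt (Vℓm i)
        ((2 * r s + ∑ j ∈ Finset.univ.erase i, μ i j s) * Vℓm i s
          - bs ℓ i s * Vm i s - bs m i s * Vℓ i s
          - ∑ j ∈ Finset.univ.erase i, μ i j s *
              (Vℓm j s + bt ℓ i j s * Vm j s + bt m i j s * Vℓ j s
                + bt ℓ i j s * bt m i j s)) s)
    (htermprod : ∀ i, Vℓm i t = 0) :
    ∀ i, (∀ s : ℝ, s ≤ t →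
      HasDerivAt (fun s' => Vℓm i s' - Vℓ i s' * Vm i s')
        (2 * r s * (Vℓm i s - Vℓ i s * Vm i s)
          - ∑ j ∈ Finset.univ.erase i, μ i j s *
              ((bt ℓ i j s + Vℓ j s - Vℓ i s) * (bt m i j s + Vm j s - Vm i s)
                + (Vℓm j s - Vℓ j s * Vm j s) - (Vℓm i s - Vℓ i s * Vm i s))) s) ∧
      (Vℓm i t - Vℓ i t * Vm i t) = 0 := by
  intro i
  refine ⟨fun s hs => ?_, by simp [htermprod, htermℓ, htermm]⟩
  have h := (hprod i s hs).sub ((hThℓ i s hs).mul (hThm i s hs))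
  refine h.congr_deriv ?_
  have key : ∑ j ∈ Finset.univ.erase i, μ i j s *
        ((bt ℓ i j s + Vℓ j s - Vℓ i s) * (bt m i j s + Vm j s - Vm i s)
          + (Vℓm j s - Vℓ j s * Vm j s) - (Vℓm i s - Vℓ i s * Vm i s))
      = -((∑ j ∈ Finset.univ.erase i, μ i j s) * Vℓm i s)
        + (∑ j ∈ Finset.univ.erase i, μ i j s *
            (Vℓm j s + bt ℓ i j s * Vm j s + bt m i j s * Vℓ j s
              + bt ℓ i j s * bt m i j s))
        - (∑ j ∈ Finset.univ.erase i, μ i j s * (bt ℓ i j s + Vℓ j s - Vℓ i s)) * Vm i s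
        - Vℓ i s * (∑ j ∈ Finset.univ.erase i, μ i j s * (bt m i j s + Vm j s - Vm i s)) := by
    simp only [Finset.sum_mul, Finset.mul_sum, ← Finset.sum_sub_distrib,
      ← Finset.sum_add_distrib, neg_add_rev, ← Finset.sum_neg_distrib]
    exact Finset.sum_congr rfl fun j _ => by ring
  rw [key]; ring
end
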